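/- arXiv:2507.15552 — 4 statements merged into one kernel-verified Lean document; each statement's English description precedes it below -/
import Mathlib

section
/- Every positive real number x lying in ℤ + [1/2, 1] (i.e. such that 1/2 ≤ x − m ≤ 1 for some integer m) can be represented as a product of two continued fractions all of whose odd-order partial quotients are equal to 1: there exist nonnegative integers a_0, b_0 and (finite or infinite) sequences of positive integers a_2, a_4, a_6, … and b_2, b_4, b_6, … such that x = [a_0; 1, a_2, 1, a_4, 1, a_6, …] · [b_0; 1, b_2, 1, b_4, 1, b_6, …], where in the finite case the expansion terminates after some partial quotient. -/
open Filter Topology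

/-- Value of the finite continued fraction tail `1/(c_1 + 1/(c_2 + ⋯))`. -/
noncomputable def cfTail : List ℕ → ℝ
  | [] => 0
  | c :: l => 1 / (c + cfTail l)

/-- Value of the finite continued fraction `[a_0; c_1, …, c_n]`. -/
noncomputable def cfFin (a0 : ℤ) (l : List ℕ) : ℝ := a0 + cfTail l

/-- `y` is the value of a (finite or infinite) continued fraction with integer part `a0`,
positive integer partial quotients, all of whose odd-order partial quotients equal `1`
(the partial quotient `c_{i+1}` sits at list/sequence index `i`, so odd order means
even index). -/
def IsOddOneCF (a0 : ℤ) (y : ℝ) : Prop :=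
  (∃ l : List ℕ, l ≠ [] ∧ (∀ c ∈ l, 0 < c) ∧
      (∀ i : Fin l.length, (i : ℕ) % 2 = 0 → l.get i = 1) ∧ y = cfFin a0 l) ∨
  (∃ c : ℕ → ℕ, (∀ i, 0 < c i) ∧ (∀ k : ℕ, c (2 * k) = 1) ∧
      Tendsto (fun n => cfFin a0 (List.ofFn fun i : Fin n => c i)) atTop (nhds y))

namespace OddOne

/-- minus continued fraction value with digits `β ≥ 3`. -/
noncomputable def mval : List ℕ → ℝ
  | [] => 0
  | β :: l => 1 / (β - mval l)

def All3 (l : List ℕ) : Prop := ∀ β ∈ l, 3 ≤ β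

lemma mval_bounds {l : List ℕ} (h : All3 l) : 0 ≤ mval l ∧ mval l ≤ 1 / 2 := by
  induction l with
  | nil => simp [mval]
  | cons β l ih =>
    have h3 : (3 : ℝ) ≤ (β : ℝ) := by exact_mod_cast h β List.mem_cons_self
    obtain ⟨h0, h12⟩ := ih (fun b hb => h b (List.mem_cons_of_mem _ hb))
    have hden : (5 : ℝ) / 2 ≤ (β : ℝ) - mval l := by linarith
    have hdenpos : (0 : ℝ) < (β : ℝ) - mval l := by linarith
    have hmv : mval (β :: l) = 1 / ((β : ℝ) - mval l) := rfl
    constructor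
    · rw [hmv]; positivity
    · rw [hmv, div_le_iff₀ hdenpos]; linarith

lemma mval_nonneg {l : List ℕ} (h : All3 l) : 0 ≤ mval l := (mval_bounds h).1
lemma mval_le_half {l : List ℕ} (h : All3 l) : mval l ≤ 1 / 2 := (mval_bounds h).2

/-- translation to plus-CF digit lists: `[β₁,…,βk] ↦ [1, β₁-2, 1, β₂-2, …, 1, βk-2, 1]`. -/
def tr : List ℕ → List ℕ
  | [] => [1]
  | β :: l => 1 :: (β - 2) :: tr l

lemma tr_ne_nil (l : List ℕ) : tr l ≠ [] := by cases l <;> simp [tr]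

lemma tr_pos {l : List ℕ} (h : All3 l) : ∀ c ∈ tr l, 0 < c := by
  induction l with
  | nil => intro c hc; simp [tr] at hc; omega
  | cons β l ih =>
    intro c hc
    simp only [tr, List.mem_cons] at hc
    rcases hc with rfl | rfl | hc
    · omega
    · have := h β List.mem_cons_self; omega
    · exact ih (fun b hb => h b (List.mem_cons_of_mem _ hb)) c hc

lemma tr_even_one {l : List ℕ} : ∀ i : Fin (tr l).length, (i : ℕ) % 2 = 0 → (tr l).get i = 1 := by
  induction l with
  | nil => intro i hi; fin_cases i <;> simp_all [tr]
  | cons β l ih =>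
    intro i hi
    match i with
    | ⟨0, h0⟩ => rfl
    | ⟨1, h1⟩ => simp at hi
    | ⟨n + 2, hn⟩ =>
      have hn' : n < (tr l).length := by simpa [tr] using hn
      have hi' : n % 2 = 0 := by simpa using hi
      exact ih ⟨n, hn'⟩ hi'

lemma cfTail_tr {l : List ℕ} (h : All3 l) : cfTail (tr l) = 1 - mval l := by
  induction l with
  | nil => simp [tr, cfTail, mval]
  | cons β l ih =>
    have h3 : 3 ≤ β := h β List.mem_cons_self
    have h3r : (3 : ℝ) ≤ (β : ℝ) := by exact_mod_cast h3
    have htl : All3 l := fun b hb => h b (List.mem_cons_of_mem _ hb)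
    have hm0 := mval_nonneg htl
    have hm2 := mval_le_half htl
    have ihl := ih htl
    have hcast : ((β - 2 : ℕ) : ℝ) = (β : ℝ) - 2 := by
      have : 2 ≤ β := by omega
      push_cast [this]; ring
    have hD : (0 : ℝ) < (β : ℝ) - 1 - mval l := by linarith
    have hD2 : (0 : ℝ) < (β : ℝ) - mval l := by linarith
    have hshow : cfTail (tr (β :: l)) = 1 / (1 + 1 / (((β - 2 : ℕ) : ℝ) + cfTail (tr l))) := by
      simp [tr, cfTail]
    rw [hshow, hcast, ihl]
    have hmv : mval (β :: l) = 1 / ((β : ℝ) - mval l) := rfl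
    rw [hmv]
    have e1 : (β : ℝ) - 2 + (1 - mval l) = (β : ℝ) - 1 - mval l := by ring
    rw [e1]
    field_simp
    ring
/-- pair evaluator: first component is the current side's remainder. -/
noncomputable def wp : List ℕ → ℝ × ℝ
  | [] => (0, 0)
  | β :: l => (1 / (β - (wp l).2), (wp l).1)

lemma wp_bounds {l : List ℕ} (h : All3 l) :
    (0 ≤ (wp l).1 ∧ (wp l).1 ≤ 1 / 2) ∧ (0 ≤ (wp l).2 ∧ (wp l).2 ≤ 1 / 2) := by
  induction l with
  | nil => norm_num [wp]
  | cons β l ih =>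
    have h3 : (3 : ℝ) ≤ (β : ℝ) := by exact_mod_cast h β List.mem_cons_self
    obtain ⟨⟨h10, h12⟩, ⟨h20, h22⟩⟩ := ih (fun b hb => h b (List.mem_cons_of_mem _ hb))
    have hdenpos : (0 : ℝ) < (β : ℝ) - (wp l).2 := by linarith
    refine ⟨⟨?_, ?_⟩, h10, h12⟩
    · show 0 ≤ 1 / ((β : ℝ) - (wp l).2); positivity
    · show 1 / ((β : ℝ) - (wp l).2) ≤ 1 / 2
      rw [div_le_iff₀ hdenpos]; linarith

/-- even/odd entries: `eo true` takes entries at indices 0,2,4,… -/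
def eo : Bool → List ℕ → List ℕ
  | _, [] => []
  | true, a :: l => a :: eo false l
  | false, _ :: l => eo true l

lemma eo_all3 {l : List ℕ} (h : All3 l) : ∀ b, All3 (eo b l) := by
  induction l with
  | nil => intro b c hc; cases b <;> simp [eo] at hc
  | cons a l ih =>
    intro b c hc
    have hl : All3 l := fun x hx => h x (List.mem_cons_of_mem _ hx)
    cases b with
    | true =>
      simp only [eo, List.mem_cons] at hc
      rcases hc with rfl | hc
      · exact h c List.mem_cons_self
      · exact ih hl false c hc
    | false => exact ih hl true c (by simpa [eo] using hc)

lemma wp_eq_mval {l : List ℕ} :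
    (wp l).1 = mval (eo true l) ∧ (wp l).2 = mval (eo false l) := by
  induction l with
  | nil => simp [wp, eo, mval]
  | cons β l ih =>
    constructor
    · show 1 / ((β : ℝ) - (wp l).2) = mval (β :: eo false l)
      rw [ih.2]; rfl
    · show (wp l).1 = mval (eo true l)
      exact ih.1

lemma eo_append : ∀ (l l' : List ℕ), l.length % 2 = 0 →
    eo true (l ++ l') = eo true l ++ eo true l' ∧
      eo false (l ++ l') = eo false l ++ eo false l'
  | [], l', _ => by simp [eo]
  | [a], _, h => by simp at h
  | a :: a2 :: l2, l', h => by
    have h2 : l2.length % 2 = 0 := by simp at h ⊢; omega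
    obtain ⟨ih1, ih2⟩ := eo_append l2 l' h2
    constructor
    · show a :: eo false ((a2 :: l2) ++ l') = (a :: eo false (a2 :: l2)) ++ eo true l'
      show a :: eo true (l2 ++ l') = (a :: eo true l2) ++ eo true l'
      rw [ih1]; simp
    · show eo true ((a2 :: l2) ++ l') = eo true (a2 :: l2) ++ eo false l'
      show a2 :: eo false (l2 ++ l') = (a2 :: eo false l2) ++ eo false l'
      rw [ih2]; simp

/-- difference of wp values with common prefix. -/
lemma wp_prefix_diff : ∀ (l t1 t2 : List ℕ), All3 l → All3 t1 → All3 t2 →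
    |(wp (l ++ t1)).1 - (wp (l ++ t2)).1| ≤ (2/5 : ℝ) ^ l.length ∧
      |(wp (l ++ t1)).2 - (wp (l ++ t2)).2| ≤ (5/2 : ℝ) * (2/5 : ℝ) ^ l.length := by
  intro l
  induction l with
  | nil =>
    intro t1 t2 _ h1 h2
    obtain ⟨⟨a0, a2⟩, ⟨b0, b2⟩⟩ := wp_bounds h1
    obtain ⟨⟨c0, c2⟩, ⟨d0, d2⟩⟩ := wp_bounds h2
    simp only [List.nil_append, List.length_nil, pow_zero]
    constructor
    · rw [abs_le]; constructor <;> linarith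
    · rw [abs_le]; constructor <;> linarith
  | cons β l ih =>
    intro t1 t2 hl h1 h2
    have h3 : (3 : ℝ) ≤ (β : ℝ) := by exact_mod_cast hl β List.mem_cons_self
    have hl' : All3 l := fun x hx => hl x (List.mem_cons_of_mem _ hx)
    obtain ⟨ih1, ih2⟩ := ih t1 t2 hl' h1 h2
    have hb1 : All3 (l ++ t1) := fun x hx => by
      rcases List.mem_append.1 hx with hx | hx
      exacts [hl' x hx, h1 x hx]
    have hb2 : All3 (l ++ t2) := fun x hx => by
      rcases List.mem_append.1 hx with hx | hx
      exacts [hl' x hx, h2 x hx]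
    obtain ⟨-, ⟨e0, e2⟩⟩ := wp_bounds hb1
    obtain ⟨-, ⟨f0, f2⟩⟩ := wp_bounds hb2
    set v1 := (wp (l ++ t1)).2
    set v2 := (wp (l ++ t2)).2
    have hden1 : (5:ℝ)/2 ≤ (β : ℝ) - v1 := by linarith
    have hden2 : (5:ℝ)/2 ≤ (β : ℝ) - v2 := by linarith
    have hpos1 : (0:ℝ) < (β : ℝ) - v1 := by linarith
    have hpos2 : (0:ℝ) < (β : ℝ) - v2 := by linarith
    constructor
    · show |1 / ((β : ℝ) - v1) - 1 / ((β : ℝ) - v2)| ≤ (2/5 : ℝ) ^ (β :: l).length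
      have key : 1 / ((β : ℝ) - v1) - 1 / ((β : ℝ) - v2)
          = (v1 - v2) / (((β : ℝ) - v1) * ((β : ℝ) - v2)) := by
        field_simp
        try ring
      rw [key, abs_div]
      have hdenom : (25:ℝ)/4 ≤ |((β : ℝ) - v1) * ((β : ℝ) - v2)| := by
        rw [abs_of_pos (by positivity)]
        nlinarith
      have hdenompos : (0:ℝ) < |((β : ℝ) - v1) * ((β : ℝ) - v2)| := by linarith
      rw [div_le_iff₀ hdenompos]
      have hstep : |v1 - v2| ≤ (5/2 : ℝ) * (2/5 : ℝ) ^ l.length := ih2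
      have hpow : (0:ℝ) < (2/5 : ℝ) ^ l.length := by positivity
      calc |v1 - v2| ≤ (5/2 : ℝ) * (2/5 : ℝ) ^ l.length := hstep
        _ = ((2/5 : ℝ) ^ (β :: l).length) * (25/4) := by
            rw [List.length_cons, pow_succ]; ring
        _ ≤ (2/5 : ℝ) ^ (β :: l).length * |((β : ℝ) - v1) * ((β : ℝ) - v2)| := by
            have : (0:ℝ) < (2/5 : ℝ) ^ (β :: l).length := by positivity
            nlinarith
    · show |(wp (l ++ t1)).1 - (wp (l ++ t2)).1| ≤ (5/2 : ℝ) * (2/5 : ℝ) ^ (β :: l).length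
      calc |(wp (l ++ t1)).1 - (wp (l ++ t2)).1| ≤ (2/5 : ℝ) ^ l.length := ih1
        _ = (5/2 : ℝ) * (2/5 : ℝ) ^ (β :: l).length := by
            rw [List.length_cons, pow_succ]; ring
/-- Algorithm state: the bilinear constraint `a·uv + b·u + c·v + d = 0` with invariants. -/
structure St (x : ℝ) where
  a : ℝ
  b : ℝ
  c : ℝ
  d : ℝ
  ha : 0 < a
  hb : b < 0
  hc : c < 0
  hd : 0 < d
  hdet : a * d - b * c = -x
  hb2 : 2 * d < -b
  hdh : d < 1 / 2

variable {x : ℝ}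

lemma St.rho_gt (s : St x) : 2 < -s.b / s.d := by
  rw [lt_div_iff₀ s.hd]; linarith [s.hb2]

lemma St.ceil_ge (s : St x) : (3 : ℤ) ≤ ⌈-s.b / s.d⌉ := by
  have : (2 : ℤ) < ⌈-s.b / s.d⌉ := Int.lt_ceil.mpr (by exact_mod_cast s.rho_gt)
  omega

noncomputable def St.dig (s : St x) : ℕ := (⌈-s.b / s.d⌉).toNat

lemma St.dig_ge (s : St x) : 3 ≤ s.dig := by
  have := s.ceil_ge; unfold St.dig; omega

lemma St.dig_cast (s : St x) : (s.dig : ℝ) = ((⌈-s.b / s.d⌉ : ℤ) : ℝ) := by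
  have h0 : (0 : ℤ) ≤ ⌈-s.b / s.d⌉ := le_trans (by norm_num) s.ceil_ge
  unfold St.dig
  exact_mod_cast congrArg (fun z : ℤ => (z : ℝ)) (Int.toNat_of_nonneg h0)

lemma St.dig_ge_rho (s : St x) : -s.b / s.d ≤ (s.dig : ℝ) := by
  rw [s.dig_cast]; exact Int.le_ceil _

lemma St.dig_lt_rho (s : St x) : (s.dig : ℝ) < -s.b / s.d + 1 := by
  rw [s.dig_cast]; exact_mod_cast Int.ceil_lt_add_one _

noncomputable def St.d' (s : St x) : ℝ := s.b + s.d * s.dig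

lemma St.d'_nonneg (s : St x) : 0 ≤ s.d' := by
  have h1 : -s.b ≤ (s.dig : ℝ) * s.d := (div_le_iff₀ s.hd).1 s.dig_ge_rho
  unfold St.d'; nlinarith

lemma St.d'_lt (s : St x) : s.d' < s.d := by
  have h1 : ((s.dig : ℝ) - 1) < -s.b / s.d := by linarith [s.dig_lt_rho]
  have h2 : ((s.dig : ℝ) - 1) * s.d < -s.b := (lt_div_iff₀ s.hd).1 h1
  unfold St.d'; nlinarith

/-- key estimate: `a + c·dig ≤ -x/d < 0`. -/
lemma St.b_new_le (s : St x) (hx : 0 < x) : s.a + s.c * s.dig ≤ -x / s.d := by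
  -- c < 0 and dig ≥ -b/d   ⇒   c * dig ≤ c * (-b/d)
  have h1 : s.c * (s.dig : ℝ) ≤ s.c * (-s.b / s.d) := by
    apply mul_le_mul_of_nonpos_left s.dig_ge_rho (le_of_lt s.hc)
  have hbc : s.b * s.c = s.a * s.d + x := by linarith [s.hdet]
  have h2 : s.c * (-s.b / s.d) = -(s.a * s.d + x) / s.d := by
    rw [← hbc]; field_simp
  have hdne : s.d ≠ 0 := ne_of_gt s.hd
  have h3 : -(s.a * s.d + x) / s.d = -s.a - x / s.d := by
    field_simp; ring
  calc s.a + s.c * s.dig ≤ s.a + s.c * (-s.b / s.d) := by linarith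
    _ = s.a + (-s.a - x / s.d) := by rw [h2, h3]
    _ = -x / s.d := by ring

/-- one step of the algorithm (continuing case). -/
noncomputable def St.step (s : St x) (hx : 1 / 2 ≤ x) (h : s.d' ≠ 0) : St x where
  a := -s.c
  b := s.a + s.c * s.dig
  c := -s.d
  d := s.d'
  ha := by linarith [s.hc]
  hb := by
    have h1 := s.b_new_le (by linarith : (0:ℝ) < x)
    have hxd : 0 < x / s.d := div_pos (by linarith) s.hd
    have hneg : -x / s.d = -(x / s.d) := neg_div _ _
    linarith [hneg ▸ h1]
  hc := by linarith [s.hd]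
  hd := lt_of_le_of_ne s.d'_nonneg (Ne.symm h)
  hdet := by
    calc -s.c * s.d' - (s.a + s.c * s.dig) * -s.d = s.a * s.d - s.b * s.c := by
          unfold St.d'; ring
      _ = -x := s.hdet
  hb2 := by
    have h1 := s.b_new_le (by linarith : (0:ℝ) < x)
    have h2 : 2 * s.d' * s.d < x := by nlinarith [s.d'_lt, s.d'_nonneg, s.hd, s.hdh]
    have h3 : 2 * s.d' < x / s.d := (lt_div_iff₀ s.hd).2 (by linarith)
    have h4 : x / s.d ≤ -(s.a + s.c * s.dig) := by
      have : s.a + s.c * s.dig ≤ -x / s.d := h1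
      have hne : -x / s.d = -(x / s.d) := by ring
      linarith [hne ▸ this]
    linarith
  hdh := by linarith [s.d'_lt, s.hdh]
noncomputable def Fval (s : St x) (p : ℝ × ℝ) : ℝ :=
  s.a * p.1 * p.2 + s.b * p.1 + s.c * p.2 + s.d

lemma Fval_step_eq (s : St x) (hx : 1 / 2 ≤ x) (h : s.d' ≠ 0) (rest : List ℕ)
    (hrest : All3 rest) :
    Fval s (wp (s.dig :: rest)) * ((s.dig : ℝ) - (wp rest).2)
      = Fval (s.step hx h) (wp rest) := by
  obtain ⟨-, hv0, hv2⟩ := wp_bounds hrest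
  have h3 : (3 : ℝ) ≤ (s.dig : ℝ) := by exact_mod_cast s.dig_ge
  have hD : (0 : ℝ) < (s.dig : ℝ) - (wp rest).2 := by linarith
  have hDne : ((s.dig : ℝ) - (wp rest).2) ≠ 0 := ne_of_gt hD
  show (s.a * (1 / ((s.dig : ℝ) - (wp rest).2)) * (wp rest).1
      + s.b * (1 / ((s.dig : ℝ) - (wp rest).2)) + s.c * (wp rest).1 + s.d)
      * ((s.dig : ℝ) - (wp rest).2)
    = -s.c * (wp rest).1 * (wp rest).2 + (s.a + s.c * s.dig) * (wp rest).1
      + -s.d * (wp rest).2 + s.d'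
  unfold St.d'
  field_simp
  ring

lemma Fval_step_zero (s : St x) (hx : 1 / 2 ≤ x) (h : s.d' ≠ 0) (rest : List ℕ)
    (hrest : All3 rest) (h0 : Fval (s.step hx h) (wp rest) = 0) :
    Fval s (wp (s.dig :: rest)) = 0 := by
  obtain ⟨-, hv0, hv2⟩ := wp_bounds hrest
  have h3 : (3 : ℝ) ≤ (s.dig : ℝ) := by exact_mod_cast s.dig_ge
  have hD : (0 : ℝ) < (s.dig : ℝ) - (wp rest).2 := by linarith
  have := Fval_step_eq s hx h rest hrest
  rw [h0] at this
  exact (mul_eq_zero.1 this).resolve_right (ne_of_gt hD)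

lemma Fval_step_bound (s : St x) (hx : 1 / 2 ≤ x) (h : s.d' ≠ 0) (rest : List ℕ)
    (hrest : All3 rest) :
    |Fval s (wp (s.dig :: rest))| ≤ (2 / 5) * |Fval (s.step hx h) (wp rest)| := by
  obtain ⟨-, hv0, hv2⟩ := wp_bounds hrest
  have h3 : (3 : ℝ) ≤ (s.dig : ℝ) := by exact_mod_cast s.dig_ge
  have hD : (5 : ℝ) / 2 ≤ (s.dig : ℝ) - (wp rest).2 := by linarith
  have hDpos : (0 : ℝ) < (s.dig : ℝ) - (wp rest).2 := by linarith
  have heq := Fval_step_eq s hx h rest hrest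
  have habs : |Fval s (wp (s.dig :: rest))| * ((s.dig : ℝ) - (wp rest).2)
      = |Fval (s.step hx h) (wp rest)| := by
    rw [← heq, abs_mul, abs_of_pos hDpos]
  have h1 : |Fval s (wp (s.dig :: rest))| * (5 / 2)
      ≤ |Fval (s.step hx h) (wp rest)| := by
    rw [← habs]
    have := abs_nonneg (Fval s (wp (s.dig :: rest)))
    nlinarith
  linarith

variable (hx : 1 / 2 ≤ x) (s0 : St x)

noncomputable def runA : ℕ → Option (St x)
  | 0 => some s0
  | n + 1 => match runA n with
    | none => none
    | some s => if h : s.d' = 0 then none else some (s.step hx h)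

lemma runA_succ (n : ℕ) : runA hx s0 (n + 1) = match runA hx s0 n with
    | none => none
    | some s => if h : s.d' = 0 then none else some (s.step hx h) := rfl

lemma runA_none_mono {n : ℕ} (h : runA hx s0 n = none) : ∀ k, runA hx s0 (n + k) = none := by
  intro k
  induction k with
  | zero => exact h
  | succ k ih => rw [← Nat.add_assoc, runA_succ, ih]

noncomputable def digAt (n : ℕ) : ℕ :=
  match runA hx s0 n with
  | none => 3
  | some s => s.dig

lemma digAt_ge (n : ℕ) : 3 ≤ digAt hx s0 n := by
  unfold digAt
  cases hr : runA hx s0 n with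
  | none => simp
  | some s => simpa using s.dig_ge

lemma digAt_run {n : ℕ} {s : St x} (h : runA hx s0 n = some s) : digAt hx s0 n = s.dig := by
  unfold digAt; rw [h]

noncomputable def digsFrom (n L : ℕ) : List ℕ :=
  (List.range L).map (fun i => digAt hx s0 (n + i))

lemma digsFrom_all3 (n L : ℕ) : All3 (digsFrom hx s0 n L) := by
  intro b hb
  simp only [digsFrom, List.mem_map] at hb
  obtain ⟨i, -, rfl⟩ := hb
  exact digAt_ge hx s0 _

lemma digsFrom_succ (n L : ℕ) :
    digsFrom hx s0 n (L + 1) = digAt hx s0 n :: digsFrom hx s0 (n + 1) L := by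
  unfold digsFrom
  rw [List.range_succ_eq_map]
  simp only [List.map_cons, List.map_map, Function.comp_def, Nat.add_zero]
  congr 1
  apply List.map_congr_left
  intro i _
  congr 1
  omega

lemma digsFrom_len (n L : ℕ) : (digsFrom hx s0 n L).length = L := by
  simp [digsFrom]
/-- residual bound along an infinite run. -/
lemma res_bound (hinf : ∀ n, runA hx s0 n ≠ none) :
    ∀ (L n : ℕ) (s : St x), runA hx s0 n = some s →
      |Fval s (wp (digsFrom hx s0 n L))| ≤ (1 / 2) * (2 / 5) ^ L := by
  intro L
  induction L with
  | zero =>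
    intro n s hs
    have : digsFrom hx s0 n 0 = [] := by simp [digsFrom]
    rw [this]
    show |Fval s (0, 0)| ≤ (1:ℝ)/2 * 1
    have : Fval s (0, 0) = s.d := by unfold Fval; ring
    rw [this, abs_of_pos s.hd]
    linarith [s.hdh]
  | succ L ih =>
    intro n s hs
    have hne : s.d' ≠ 0 := by
      intro h0
      apply hinf (n + 1)
      rw [runA_succ, hs]
      simp [h0]
    have hrun' : runA hx s0 (n + 1) = some (s.step hx hne) := by
      rw [runA_succ, hs]
      simp [hne]
    have ihb := ih (n + 1) _ hrun'
    rw [digsFrom_succ, digAt_run hx s0 hs]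
    calc |Fval s (wp (s.dig :: digsFrom hx s0 (n + 1) L))|
        ≤ (2 / 5) * |Fval (s.step hx hne) (wp (digsFrom hx s0 (n + 1) L))| :=
          Fval_step_bound s hx hne _ (digsFrom_all3 hx s0 _ _)
      _ ≤ (2 / 5) * ((1 / 2) * (2 / 5) ^ L) := by linarith
      _ = (1 / 2) * (2 / 5) ^ (L + 1) := by ring

/-- exact evaluation for terminating runs. -/
lemma eval_fin :
    ∀ (L n : ℕ) (s : St x), runA hx s0 n = some s →
      (∀ t : St x, runA hx s0 (n + L) = some t → t.d' = 0) →
      (∃ t : St x, runA hx s0 (n + L) = some t) →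
      Fval s (wp (digsFrom hx s0 n (L + 1))) = 0 := by
  intro L
  induction L with
  | zero =>
    intro n s hs hterm _
    have hd0 : s.d' = 0 := hterm s (by simpa using hs)
    rw [digsFrom_succ, digAt_run hx s0 hs]
    have : digsFrom hx s0 (n + 1) 0 = [] := by simp [digsFrom]
    rw [this]
    have h3 : (3:ℝ) ≤ (s.dig : ℝ) := by exact_mod_cast s.dig_ge
    have hne : ((s.dig : ℝ)) ≠ 0 := by linarith
    show s.a * (1 / ((s.dig : ℝ) - 0)) * 0 + s.b * (1 / ((s.dig : ℝ) - 0)) + s.c * 0 + s.d = 0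
    have : s.b * (1 / ((s.dig : ℝ) - 0)) + s.d = (s.b + s.d * s.dig) / s.dig := by
      field_simp
      try ring
    have hcombine : s.a * (1 / ((s.dig : ℝ) - 0)) * 0 + s.b * (1 / ((s.dig : ℝ) - 0)) + s.c * 0 + s.d
        = (s.b + s.d * s.dig) / s.dig := by
      rw [← this]; ring
    rw [hcombine]
    have : s.b + s.d * s.dig = s.d' := rfl
    rw [this, hd0, zero_div]
  | succ L ih =>
    intro n s hs hterm hex
    obtain ⟨t, ht⟩ := hex
    have hne : s.d' ≠ 0 := by
      intro h0
      have hnone : runA hx s0 (n + 1) = none := by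
        rw [runA_succ, hs]; simp [h0]
      have := runA_none_mono hx s0 hnone L
      rw [show n + 1 + L = n + (L + 1) by omega] at this
      rw [this] at ht; cases ht
    have hrun' : runA hx s0 (n + 1) = some (s.step hx hne) := by
      rw [runA_succ, hs]; simp [hne]
    have ihz := ih (n + 1) _ hrun'
      (by rw [show n + 1 + L = n + (L + 1) by omega]; exact hterm)
      (by rw [show n + 1 + L = n + (L + 1) by omega]; exact ⟨t, ht⟩)
    rw [digsFrom_succ, digAt_run hx s0 hs]
    exact Fval_step_zero s hx hne _ (digsFrom_all3 hx s0 _ _) ihz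
lemma isOddOneCF_tr (a0 : ℕ) {l : List ℕ} (h : All3 l) :
    IsOddOneCF (a0 : ℤ) (cfFin a0 (tr l)) :=
  Or.inl ⟨tr l, tr_ne_nil l, tr_pos h, tr_even_one, rfl⟩

noncomputable def initSt (m : ℕ) (x : ℝ) (h1 : (m : ℝ) + 1 / 2 < x) (h2 : x < (m : ℝ) + 1) :
    St x where
  a := 1
  b := -1
  c := -((m : ℝ) + 1)
  d := ((m : ℝ) + 1) - x
  ha := one_pos
  hb := by norm_num
  hc := by
    have : (0:ℝ) ≤ (m:ℝ) := Nat.cast_nonneg m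
    linarith
  hd := by linarith
  hdet := by ring
  hb2 := by linarith
  hdh := by linarith
lemma finite_case (m : ℕ) (hx : 1 / 2 ≤ x) (s0 : St x)
    (hinit : s0.a = 1 ∧ s0.b = -1 ∧ s0.c = -((m : ℝ) + 1) ∧ s0.d = ((m : ℝ) + 1) - x)
    (hfin : ∃ n, runA hx s0 n = none) :
    ∃ y z : ℝ, IsOddOneCF (m : ℤ) y ∧ IsOddOneCF (0 : ℤ) z ∧ x = y * z := by
  classical
  obtain ⟨a1, b1, c1, d1⟩ := hinit
  have h0 : runA hx s0 0 = some s0 := rfl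
  -- least n with runA = none
  have hP : ∃ n, runA hx s0 n = none := hfin
  have hk : runA hx s0 (Nat.find hP) = none := Nat.find_spec hP
  have hkpos : Nat.find hP ≠ 0 := by
    intro h
    rw [h, h0] at hk
    cases hk
  obtain ⟨K, hK⟩ : ∃ K, Nat.find hP = K + 1 := ⟨Nat.find hP - 1, by omega⟩
  rw [hK] at hk
  have hKlt : ¬ runA hx s0 K = none := Nat.find_min hP (by omega)
  obtain ⟨s, hs⟩ : ∃ s, runA hx s0 K = some s := by
    cases hr : runA hx s0 K with
    | none => exact absurd hr hKlt
    | some s => exact ⟨s, rfl⟩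
  have hd0 : s.d' = 0 := by
    by_contra hne
    have : runA hx s0 (K + 1) = some (s.step hx hne) := by
      rw [runA_succ, hs]; simp [hne]
    rw [this] at hk; cases hk
  have heval : Fval s0 (wp (digsFrom hx s0 0 (K + 1))) = 0 := by
    apply eval_fin hx s0 K 0 s0 h0
    · intro t ht
      rw [Nat.zero_add] at ht
      rw [hs] at ht
      cases ht
      exact hd0
    · exact ⟨s, by simpa using hs⟩
  set betas := digsFrom hx s0 0 (K + 1) with hbetas
  have hall : All3 betas := digsFrom_all3 hx s0 0 (K + 1)
  set u := (wp betas).1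
  set v := (wp betas).2
  have hFval : 1 * u * v + (-1) * u + (-((m:ℝ)+1)) * v + (((m:ℝ)+1) - x) = 0 := by
    have : Fval s0 (wp betas) = s0.a * u * v + s0.b * u + s0.c * v + s0.d := rfl
    rw [this, a1, b1, c1, d1] at heval
    exact heval
  have hxuv : x = ((m : ℝ) + 1 - u) * (1 - v) := by nlinarith [hFval]
  have hu : u = mval (eo true betas) := wp_eq_mval.1
  have hv : v = mval (eo false betas) := wp_eq_mval.2
  refine ⟨cfFin m (tr (eo true betas)), cfFin 0 (tr (eo false betas)),
    isOddOneCF_tr m (eo_all3 hall true), isOddOneCF_tr 0 (eo_all3 hall false), ?_⟩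
  have hy : cfFin (m : ℤ) (tr (eo true betas)) = (m : ℝ) + 1 - u := by
    unfold cfFin
    rw [cfTail_tr (eo_all3 hall true), hu]
    push_cast
    ring
  have hz : cfFin (0 : ℤ) (tr (eo false betas)) = 1 - v := by
    unfold cfFin
    rw [cfTail_tr (eo_all3 hall false), hv]
    norm_num
  rw [hy, hz]
  exact hxuv
def blocks : List ℕ → List ℕ
  | [] => []
  | β :: l => 1 :: (β - 2) :: blocks l

lemma tr_eq_blocks (l : List ℕ) : tr l = blocks l ++ [1] := by
  induction l with
  | nil => rfl
  | cons β l ih => simp [tr, blocks, ih]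

lemma blocks_append (l l' : List ℕ) : blocks (l ++ l') = blocks l ++ blocks l' := by
  induction l with
  | nil => rfl
  | cons β l ih => simp [blocks, ih]

lemma blocks_pos {l : List ℕ} (h : All3 l) : ∀ c ∈ blocks l, 0 < c := by
  induction l with
  | nil => intro c hc; simp [blocks] at hc
  | cons β l ih =>
    intro c hc
    simp only [blocks, List.mem_cons] at hc
    rcases hc with rfl | rfl | hc
    · omega
    · have := h β List.mem_cons_self; omega
    · exact ih (fun b hb => h b (List.mem_cons_of_mem _ hb)) c hc

lemma blocks_len (l : List ℕ) : (blocks l).length = 2 * l.length := by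
  induction l with
  | nil => rfl
  | cons β l ih => simp [blocks, ih]; omega

lemma cfTail_bounds {l : List ℕ} (h : ∀ c ∈ l, 0 < c) : 0 ≤ cfTail l ∧ cfTail l ≤ 1 := by
  induction l with
  | nil => norm_num [cfTail]
  | cons c l ih =>
    have hc : (1 : ℝ) ≤ (c : ℝ) := by exact_mod_cast h c List.mem_cons_self
    obtain ⟨h0, h1⟩ := ih (fun b hb => h b (List.mem_cons_of_mem _ hb))
    have hden : (1 : ℝ) ≤ (c : ℝ) + cfTail l := by linarith
    have hdenpos : (0 : ℝ) < (c : ℝ) + cfTail l := by linarith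
    constructor
    · show 0 ≤ 1 / ((c : ℝ) + cfTail l); positivity
    · show 1 / ((c : ℝ) + cfTail l) ≤ 1
      rw [div_le_one hdenpos]; linarith

/-- contraction along a block prefix. -/
lemma cfTail_blocks_close : ∀ (dl : List ℕ), All3 dl → ∀ (t1 t2 : List ℕ),
    (∀ c ∈ t1, 0 < c) → (∀ c ∈ t2, 0 < c) →
    |cfTail (blocks dl ++ t1) - cfTail (blocks dl ++ t2)| ≤ (1 / 4 : ℝ) ^ dl.length := by
  intro dl
  induction dl with
  | nil =>
    intro _ t1 t2 h1 h2
    obtain ⟨a0, a1⟩ := cfTail_bounds h1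
    obtain ⟨b0, b1⟩ := cfTail_bounds h2
    simp only [blocks, List.nil_append, List.length_nil, pow_zero]
    rw [abs_le]; constructor <;> linarith
  | cons β dl ih =>
    intro hall t1 t2 h1 h2
    have h3 : 3 ≤ β := hall β List.mem_cons_self
    have hall' : All3 dl := fun b hb => hall b (List.mem_cons_of_mem _ hb)
    have ihd := ih hall' t1 t2 h1 h2
    have hpos1 : ∀ c ∈ blocks dl ++ t1, 0 < c := by
      intro c hc
      rcases List.mem_append.1 hc with hc | hc
      exacts [blocks_pos hall' c hc, h1 c hc]
    have hpos2 : ∀ c ∈ blocks dl ++ t2, 0 < c := by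
      intro c hc
      rcases List.mem_append.1 hc with hc | hc
      exacts [blocks_pos hall' c hc, h2 c hc]
    obtain ⟨T10, T11⟩ := cfTail_bounds hpos1
    obtain ⟨T20, T21⟩ := cfTail_bounds hpos2
    set T1 := cfTail (blocks dl ++ t1)
    set T2 := cfTail (blocks dl ++ t2)
    have hacast : ((β - 2 : ℕ) : ℝ) = (β : ℝ) - 2 := by
      have : 2 ≤ β := by omega
      push_cast [this]; ring
    have h3r : (3 : ℝ) ≤ (β : ℝ) := by exact_mod_cast h3
    -- cfTail (1 :: (β-2) :: w) = 1 / (1 + 1/((β-2) + cfTail w))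
    have hform : ∀ (w : List ℕ), cfTail ((1 : ℕ) :: (β - 2) :: w)
        = 1 / (1 + 1 / (((β - 2 : ℕ) : ℝ) + cfTail w)) := by
      intro w; simp [cfTail]
    have hval : ∀ (w : List ℕ), (∀ c ∈ w, 0 < c) →
        cfTail ((1:ℕ) :: (β - 2) :: w) = 1 - 1 / (((β:ℝ) - 1) + cfTail w) := by
      intro w hw
      obtain ⟨w0, w1⟩ := cfTail_bounds hw
      rw [hform, hacast]
      have dpos : (0:ℝ) < (β:ℝ) - 2 + cfTail w := by linarith
      have Dpos : (0:ℝ) < (β:ℝ) - 1 + cfTail w := by linarith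
      have e : (0:ℝ) < 1 + 1 / ((β:ℝ) - 2 + cfTail w) := by positivity
      field_simp
      ring
    have key : cfTail (blocks (β :: dl) ++ t1) - cfTail (blocks (β :: dl) ++ t2)
        = (T1 - T2) / ((((β:ℝ) - 1) + T1) * (((β:ℝ) - 1) + T2)) := by
      show cfTail ((1:ℕ) :: (β - 2) :: (blocks dl ++ t1))
          - cfTail ((1:ℕ) :: (β - 2) :: (blocks dl ++ t2)) = _
      rw [hval _ hpos1, hval _ hpos2]
      rw [show cfTail (blocks dl ++ t1) = T1 from rfl, show cfTail (blocks dl ++ t2) = T2 from rfl]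
      have D1pos : (0:ℝ) < (β:ℝ) - 1 + T1 := by linarith
      have D2pos : (0:ℝ) < (β:ℝ) - 1 + T2 := by linarith
      field_simp
      ring
    rw [key, abs_div]
    have hd1 : (2:ℝ) ≤ ((β:ℝ) - 1) + T1 := by linarith
    have hd2 : (2:ℝ) ≤ ((β:ℝ) - 1) + T2 := by linarith
    have hdenom : (4:ℝ) ≤ |(((β:ℝ) - 1) + T1) * (((β:ℝ) - 1) + T2)| := by
      rw [abs_of_pos (by nlinarith)]
      nlinarith
    have hdenompos : (0:ℝ) < |(((β:ℝ) - 1) + T1) * (((β:ℝ) - 1) + T2)| := by linarith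
    rw [div_le_iff₀ hdenompos]
    calc |T1 - T2| ≤ (1/4 : ℝ) ^ dl.length := ihd
      _ = ((1/4 : ℝ) ^ (β :: dl).length) * 4 := by
          rw [List.length_cons, pow_succ]; ring
      _ ≤ (1/4 : ℝ) ^ (β :: dl).length * |(((β:ℝ) - 1) + T1) * (((β:ℝ) - 1) + T2)| := by
          have : (0:ℝ) < (1/4 : ℝ) ^ (β :: dl).length := by positivity
          nlinarith
lemma range_map_split (g : ℕ → ℕ) {J J' : ℕ} (h : J ≤ J') :
    (List.range J').map g
      = (List.range J).map g ++ (List.range (J' - J)).map (fun i => g (J + i)) := by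
  conv_lhs => rw [show J' = J + (J' - J) by omega]
  rw [List.range_add, List.map_append, List.map_map]
  rfl

lemma range_map_succ (g : ℕ → ℕ) (J : ℕ) :
    (List.range (J + 1)).map g = (List.range J).map g ++ [g J] := by
  rw [List.range_succ, List.map_append]
  rfl

lemma oddOne_infinite (a0 : ℕ) (dseq : ℕ → ℕ) (hd : ∀ j, 3 ≤ dseq j) :
    ∃ y : ℝ, IsOddOneCF (a0 : ℤ) y ∧
      Tendsto (fun J => cfFin a0 (tr ((List.range J).map dseq))) atTop (nhds y) := by
  set βl : ℕ → List ℕ := fun J => (List.range J).map dseq with hβl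
  have hall : ∀ J, All3 (βl J) := by
    intro J b hb
    simp only [hβl, List.mem_map] at hb
    obtain ⟨i, -, rfl⟩ := hb
    exact hd i
  set F : ℕ → ℝ := fun J => cfFin a0 (tr (βl J)) with hF
  have hlen : ∀ J, (βl J).length = J := by intro J; simp [hβl]
  have hclose : ∀ J J', J ≤ J' → |F J' - F J| ≤ (1/4 : ℝ) ^ J := by
    intro J J' h
    have hdecomp : βl J' = βl J ++ (List.range (J' - J)).map (fun i => dseq (J + i)) :=
      range_map_split dseq h
    set mid := (List.range (J' - J)).map (fun i => dseq (J + i)) with hmid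
    have hmidall : All3 mid := by
      intro b hb
      simp only [hmid, List.mem_map] at hb
      obtain ⟨i, -, rfl⟩ := hb
      exact hd _
    have e1 : tr (βl J') = blocks (βl J) ++ (blocks mid ++ [1]) := by
      rw [tr_eq_blocks, hdecomp, blocks_append, List.append_assoc]
    have e2 : tr (βl J) = blocks (βl J) ++ [1] := tr_eq_blocks _
    have hpos1 : ∀ c ∈ blocks mid ++ [1], 0 < c := by
      intro c hc
      rcases List.mem_append.1 hc with hc | hc
      · exact blocks_pos hmidall c hc
      · simp at hc; omega
    have hpos2 : ∀ c ∈ [(1:ℕ)], 0 < c := by intro c hc; simp at hc; omega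
    have hcc := cfTail_blocks_close (βl J) (hall J) _ _ hpos1 hpos2
    rw [hlen J] at hcc
    have heq : F J' - F J = cfTail (blocks (βl J) ++ (blocks mid ++ [1]))
        - cfTail (blocks (βl J) ++ [1]) := by
      simp only [hF, cfFin, e1, e2]; ring
    rw [heq]
    exact hcc
  have hcauchy : CauchySeq F := by
    apply cauchySeq_of_le_geometric (1/4 : ℝ) 1 (by norm_num)
    intro n
    rw [Real.dist_eq, abs_sub_comm, one_mul]
    exact hclose n (n+1) (by omega)
  obtain ⟨y, hy⟩ := cauchySeq_tendsto_of_complete hcauchy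
  have hbound : ∀ J, |F J - y| ≤ (1/4 : ℝ) ^ J := by
    intro J
    have h1 : Tendsto (fun J' => |F J' - F J|) atTop (nhds |y - F J|) :=
      ((hy.sub tendsto_const_nhds).abs)
    have h2 : |y - F J| ≤ (1/4 : ℝ)^J :=
      le_of_tendsto h1 (Filter.eventually_atTop.2 ⟨J, fun J' hJ' => hclose J J' hJ'⟩)
    rw [abs_sub_comm]; exact h2
  set c : ℕ → ℕ := fun i => if i % 2 = 0 then 1 else dseq (i / 2) - 2 with hc
  have hcpos : ∀ i, 0 < c i := by
    intro i
    by_cases h : i % 2 = 0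
    · simp [hc, h]
    · simp only [hc, if_neg h]
      have := hd (i / 2); omega
  have hc2k : ∀ k, c (2 * k) = 1 := by
    intro k; simp [hc, Nat.mul_mod_right]
  have hofFn : ∀ n, (List.ofFn fun i : Fin n => c i)
      = blocks (βl (n / 2)) ++ (if n % 2 = 1 then [1] else []) := by
    intro n
    induction n with
    | zero => simp [hβl, blocks]
    | succ n ih =>
      have hconcat : (List.ofFn fun i : Fin (n+1) => c i)
          = (List.ofFn fun i : Fin n => c i) ++ [c n] := by
        rw [List.ofFn_succ']
        simp [List.concat_eq_append]
      rw [hconcat, ih]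
      rcases Nat.even_or_odd n with he | ho
      · obtain ⟨t, rfl⟩ := he
        have h1 : (t + t) % 2 = 0 := by omega
        have h2 : (t + t) / 2 = t := by omega
        have h3 : (t + t + 1) % 2 = 1 := by omega
        have h4 : (t + t + 1) / 2 = t := by omega
        have h5 : c (t + t) = 1 := by simp [hc, h1]
        rw [h1, h2, h3, h4, h5]
        simp
      · obtain ⟨t, rfl⟩ := ho
        have h1 : (2 * t + 1) % 2 = 1 := by omega
        have h2 : (2 * t + 1) / 2 = t := by omega
        have h3 : (2 * t + 1 + 1) % 2 = 0 := by omega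
        have h4 : (2 * t + 1 + 1) / 2 = t + 1 := by omega
        have h5 : c (2 * t + 1) = dseq t - 2 := by
          simp only [hc]
          rw [if_neg (by omega), h2]
        have h6 : βl (t + 1) = βl t ++ [dseq t] := range_map_succ dseq t
        rw [h1, h2, h3, h4, h5, h6, blocks_append]
        simp [blocks]
  have htend : Tendsto (fun n => cfFin (a0 : ℤ) (List.ofFn fun i : Fin n => c i))
      atTop (nhds y) := by
    rw [Metric.tendsto_atTop]
    intro ε hε
    obtain ⟨J0, hJ0⟩ : ∃ J0 : ℕ, (1/4 : ℝ)^J0 < ε/2 :=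
      exists_pow_lt_of_lt_one (by positivity) (by norm_num)
    refine ⟨2 * J0, fun n hn => ?_⟩
    have hJn : J0 ≤ n / 2 := by omega
    have hdec : βl (n/2) = βl J0 ++ (List.range (n/2 - J0)).map (fun i => dseq (J0 + i)) :=
      range_map_split dseq hJn
    set mid := (List.range (n/2 - J0)).map (fun i => dseq (J0 + i)) with hmid
    have hmidall : All3 mid := by
      intro b hb
      simp only [hmid, List.mem_map] at hb
      obtain ⟨i, -, rfl⟩ := hb
      exact hd _
    set tl := (if n % 2 = 1 then [(1:ℕ)] else []) with htl
    have hprefix : (List.ofFn fun i : Fin n => c i)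
        = blocks (βl J0) ++ (blocks mid ++ tl) := by
      rw [hofFn n, hdec, blocks_append, List.append_assoc]
    have hpos1 : ∀ d ∈ blocks mid ++ tl, 0 < d := by
      intro d hd'
      rcases List.mem_append.1 hd' with hd' | hd'
      · exact blocks_pos hmidall d hd'
      · rcases htl ▸ hd' with hd'2
        by_cases hpar : n % 2 = 1
        · rw [if_pos hpar] at hd'2; simp at hd'2; omega
        · rw [if_neg hpar] at hd'2; simp at hd'2
    have hpos2 : ∀ d ∈ [(1:ℕ)], 0 < d := by intro d hd'; simp at hd'; omega
    have hcc := cfTail_blocks_close (βl J0) (hall J0) _ _ hpos1 hpos2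
    rw [hlen J0] at hcc
    have h1 : |cfFin (a0 : ℤ) (List.ofFn fun i : Fin n => c i) - F J0| ≤ (1/4 : ℝ)^J0 := by
      have heq : cfFin (a0 : ℤ) (List.ofFn fun i : Fin n => c i) - F J0
          = cfTail (blocks (βl J0) ++ (blocks mid ++ tl))
            - cfTail (blocks (βl J0) ++ [1]) := by
        simp only [hF, cfFin, hprefix, tr_eq_blocks]; ring
      rw [heq]
      exact hcc
    have h2 := hbound J0
    rw [Real.dist_eq]
    calc |cfFin (a0 : ℤ) (List.ofFn fun i : Fin n => c i) - y|
        ≤ |cfFin (a0 : ℤ) (List.ofFn fun i : Fin n => c i) - F J0| + |F J0 - y| := by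
          have := abs_sub_abs_le_abs_sub (cfFin (a0 : ℤ) (List.ofFn fun i : Fin n => c i) - F J0) 0
          exact abs_sub_le _ _ _
      _ ≤ (1/4 : ℝ)^J0 + (1/4 : ℝ)^J0 := by linarith
      _ < ε := by linarith
  exact ⟨y, Or.inr ⟨c, hcpos, hc2k, htend⟩, hy⟩
lemma digsFrom_zero_split (J : ℕ) :
    digsFrom hx s0 0 (2*J + 2) = digsFrom hx s0 0 (2*J)
      ++ [digAt hx s0 (2*J), digAt hx s0 (2*J + 1)] := by
  unfold digsFrom
  rw [show 2*J + 2 = (2*J + 1) + 1 by omega, range_map_succ, range_map_succ]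
  simp only [Nat.zero_add, List.append_assoc]
  rfl

lemma infinite_case (m : ℕ) (s0 : St x)
    (hinit : s0.a = 1 ∧ s0.b = -1 ∧ s0.c = -((m : ℝ) + 1) ∧ s0.d = ((m : ℝ) + 1) - x)
    (hinf : ∀ n, runA hx s0 n ≠ none) :
    ∃ y z : ℝ, IsOddOneCF (m : ℤ) y ∧ IsOddOneCF (0 : ℤ) z ∧ x = y * z := by
  obtain ⟨a1, b1, c1, d1⟩ := hinit
  set dsequ : ℕ → ℕ := fun j => digAt hx s0 (2*j) with hdu
  set dseqv : ℕ → ℕ := fun j => digAt hx s0 (2*j + 1) with hdv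
  have hdu3 : ∀ j, 3 ≤ dsequ j := fun j => digAt_ge hx s0 _
  have hdv3 : ∀ j, 3 ≤ dseqv j := fun j => digAt_ge hx s0 _
  obtain ⟨y, hyCF, hyT⟩ := oddOne_infinite m dsequ hdu3
  obtain ⟨z, hzCF, hzT⟩ := oddOne_infinite 0 dseqv hdv3
  refine ⟨y, z, hyCF, hzCF, ?_⟩
  have hE : ∀ J, eo true (digsFrom hx s0 0 (2*J)) = (List.range J).map dsequ
      ∧ eo false (digsFrom hx s0 0 (2*J)) = (List.range J).map dseqv := by
    intro J
    induction J with
    | zero => simp [digsFrom, eo]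
    | succ J ih =>
      have hsplit := digsFrom_zero_split hx s0 J
      rw [show 2*(J+1) = 2*J + 2 by omega, hsplit]
      have hlen2 : (digsFrom hx s0 0 (2*J)).length % 2 = 0 := by
        rw [digsFrom_len]; omega
      obtain ⟨e1, e2⟩ := eo_append (digsFrom hx s0 0 (2*J))
        [digAt hx s0 (2*J), digAt hx s0 (2*J + 1)] hlen2
      constructor
      · rw [e1, ih.1, range_map_succ]
        rfl
      · rw [e2, ih.2, range_map_succ]
        rfl
  have hprod : ∀ J : ℕ,
      |cfFin (m:ℤ) (tr ((List.range J).map dsequ))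
        * cfFin (0:ℤ) (tr ((List.range J).map dseqv)) - x|
        ≤ (1/2) * (2/5 : ℝ)^(2*J) := by
    intro J
    have hres := res_bound hx s0 hinf (2*J) 0 s0 rfl
    set betas := digsFrom hx s0 0 (2*J) with hbetas
    have hall : All3 betas := digsFrom_all3 hx s0 0 (2*J)
    have hallu : All3 ((List.range J).map dsequ) := by
      rw [← (hE J).1]; exact eo_all3 hall true
    have hallv : All3 ((List.range J).map dseqv) := by
      rw [← (hE J).2]; exact eo_all3 hall false
    set u := (wp betas).1 with hu'
    set v := (wp betas).2 with hv'
    have hu : u = mval ((List.range J).map dsequ) := by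
      rw [hu', wp_eq_mval.1, (hE J).1]
    have hv : v = mval ((List.range J).map dseqv) := by
      rw [hv', wp_eq_mval.2, (hE J).2]
    have hFu : cfFin (m:ℤ) (tr ((List.range J).map dsequ)) = (m:ℝ) + 1 - u := by
      unfold cfFin
      rw [cfTail_tr hallu, ← hu]
      push_cast
      ring
    have hGv : cfFin (0:ℤ) (tr ((List.range J).map dseqv)) = 1 - v := by
      unfold cfFin
      rw [cfTail_tr hallv, ← hv]
      norm_num
    have hFval : Fval s0 (wp betas) = ((m:ℝ) + 1 - u)*(1 - v) - x := by
      show s0.a * u * v + s0.b * u + s0.c * v + s0.d = _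
      rw [a1, b1, c1, d1]; ring
    rw [hFu, hGv, ← hFval]
    exact hres
  have hlim1 : Tendsto (fun J => cfFin (m:ℤ) (tr ((List.range J).map dsequ))
      * cfFin (0:ℤ) (tr ((List.range J).map dseqv))) atTop (nhds (y * z)) := hyT.mul hzT
  have hbound0 : Tendsto (fun J => (1/2) * (2/5 : ℝ)^(2*J)) atTop (nhds 0) := by
    have h1 : Tendsto (fun J : ℕ => ((2/5 : ℝ)^2)^J) atTop (nhds 0) :=
      tendsto_pow_atTop_nhds_zero_of_lt_one (by norm_num) (by norm_num)
    have h2 := h1.const_mul (1/2 : ℝ)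
    rw [mul_zero] at h2
    convert h2 using 2 with J
    rw [pow_mul]
  have hlim2 : Tendsto (fun J => cfFin (m:ℤ) (tr ((List.range J).map dsequ))
      * cfFin (0:ℤ) (tr ((List.range J).map dseqv))) atTop (nhds x) := by
    rw [tendsto_iff_dist_tendsto_zero]
    apply squeeze_zero (fun J => dist_nonneg)
      (fun J => by rw [Real.dist_eq]; exact hprod J) hbound0
  exact tendsto_nhds_unique hlim2 hlim1
lemma isOddOne_one (a0 : ℕ) : IsOddOneCF (a0 : ℤ) (cfFin a0 [1]) := by
  refine Or.inl ⟨[1], by simp, ?_, ?_, rfl⟩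
  · intro c hc; simp at hc; omega
  · intro i _; fin_cases i; rfl

lemma isOddOne_oneone (a0 : ℕ) : IsOddOneCF (a0 : ℤ) (cfFin a0 [1, 1]) := by
  refine Or.inl ⟨[1, 1], by simp, ?_, ?_, rfl⟩
  · intro c hc; simp at hc; omega
  · intro i hi
    fin_cases i
    · rfl
    · simp at hi

lemma cfTail_one : cfTail [1] = 1 := by
  show 1 / (((1:ℕ):ℝ) + cfTail []) = 1
  norm_num [cfTail]

lemma cfTail_oneone : cfTail [1, 1] = 1 / 2 := by
  show 1 / (((1:ℕ):ℝ) + cfTail [1]) = 1 / 2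
  rw [cfTail_one]
  norm_num

end OddOne

/-- Every positive real `x ∈ ℤ + [1/2, 1]` is a product of two continued fractions
with nonnegative integer parts whose odd-order partial quotients are all equal to `1`. -/
theorem prod_of_two_oddOne_cf (x : ℝ) (hx0 : 0 < x)
    (hx : ∃ m : ℤ, 1 / 2 ≤ x - m ∧ x - m ≤ 1) :
    ∃ (a0 b0 : ℕ) (y z : ℝ), IsOddOneCF (a0 : ℤ) y ∧ IsOddOneCF (b0 : ℤ) z ∧ x = y * z := by
  classical
  obtain ⟨m, h1, h2⟩ := hx
  have hm0 : 0 ≤ m := by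
    have hmr : (-1 : ℝ) < (m : ℝ) := by linarith
    have : (-1 : ℤ) < m := by exact_mod_cast hmr
    omega
  set μ : ℕ := m.toNat with hμ
  have hμr : ((μ : ℕ) : ℝ) = (m : ℝ) := by
    rw [hμ]; exact_mod_cast congrArg (fun z : ℤ => (z : ℝ)) (Int.toNat_of_nonneg hm0)
  by_cases htop : x = (μ : ℝ) + 1
  · refine ⟨μ, 0, cfFin μ [1], cfFin 0 [1], OddOne.isOddOne_one μ, OddOne.isOddOne_one 0, ?_⟩
    unfold cfFin
    rw [OddOne.cfTail_one]
    push_cast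
    rw [htop]
    ring
  by_cases hbot : x = (μ : ℝ) + 1 / 2
  · refine ⟨μ, 0, cfFin μ [1, 1], cfFin 0 [1],
      OddOne.isOddOne_oneone μ, OddOne.isOddOne_one 0, ?_⟩
    unfold cfFin
    rw [OddOne.cfTail_oneone, OddOne.cfTail_one]
    push_cast
    rw [hbot]
    ring
  -- main case
  have hstrict1 : (μ : ℝ) + 1 / 2 < x := by
    rcases lt_or_eq_of_le (by rw [hμr]; linarith : (μ : ℝ) + 1 / 2 ≤ x) with h | h
    · exact h
    · exact absurd h.symm hbot
  have hstrict2 : x < (μ : ℝ) + 1 := by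
    rcases lt_or_eq_of_le (by rw [hμr]; linarith : x ≤ (μ : ℝ) + 1) with h | h
    · exact h
    · exact absurd h htop
  have hxhalf : 1 / 2 ≤ x := by
    have : (0 : ℝ) ≤ (μ : ℝ) := Nat.cast_nonneg μ
    linarith
  set s0 : OddOne.St x := OddOne.initSt μ x hstrict1 hstrict2 with hs0
  have hinit : s0.a = 1 ∧ s0.b = -1 ∧ s0.c = -((μ : ℝ) + 1) ∧ s0.d = ((μ : ℝ) + 1) - x :=
    ⟨rfl, rfl, rfl, rfl⟩
  by_cases hfin : ∃ n, OddOne.runA hxhalf s0 n = none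
  · obtain ⟨y, z, hy, hz, hxyz⟩ := OddOne.finite_case (m := μ) (hx := hxhalf) (s0 := s0) hinit hfin
    exact ⟨μ, 0, y, z, hy, hz, hxyz⟩
  · push_neg at hfin
    obtain ⟨y, z, hy, hz, hxyz⟩ := OddOne.infinite_case (m := μ) (hx := hxhalf) (s0 := s0) hinit hfin
    exact ⟨μ, 0, y, z, hy, hz, hxyz⟩
end

section
/- Let φ : ℕ → (0,∞) be a positive function with liminf_{n→∞} (log φ(n))/(2n) = ∞ and liminf_{n→∞} (log log φ(n))/(2n) = ∞ (i.e. B = ∞ and b = ∞). Then the Hausdorff dimension of F(φ) = {x ∈ I_even : a_{2n}(x) ≥ φ(n) for infinitely many n} equals 0. -/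
open Filter Topology MeasureTheory

/-- The Gauss map `T(x) = 1/x mod 1`. -/
noncomputable def gaussMap (x : ℝ) : ℝ := Int.fract (1 / x)

/-- The `n`-th continued fraction partial quotient of `x`:
`a_n(x) = ⌊1 / T^{n-1}(x)⌋` for `n ≥ 1`. -/
noncomputable def cfa (n : ℕ) (x : ℝ) : ℤ := ⌊1 / (gaussMap^[n - 1] x)⌋

/-- The set of irrational `x ∈ [0,1)` whose odd-order partial quotients all equal 1. -/
def Ieven : Set ℝ :=
  {x | x ∈ Set.Ico (0 : ℝ) 1 ∧ Irrational x ∧ ∀ k : ℕ, cfa (2 * k + 1) x = 1}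

/-- Given `[a_2, a_4, …, a_{2n}]`, the denominator `q_{2n}` of
`[0; 1, a_2, 1, a_4, …, 1, a_{2n}]` (with `q_0 = q_1 = 1`,
`q_{2j} = a_{2j} q_{2j-1} + q_{2j-2}`, `q_{2j+1} = q_{2j} + q_{2j-1}`). -/
def qEven (l : List ℕ) : ℕ :=
  (l.foldl (fun p a => (p.2 + p.1, a * (p.2 + p.1) + p.2)) ((0 : ℕ), (1 : ℕ))).2

/-- `f_{n,B}(ρ) = Σ_{a_2,…,a_{2n} ∈ 𝒜} (B^{2n} q_{2n}²)^{−ρ}`. -/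
noncomputable def fnB (A : Set ℕ) (B : ℝ) (n : ℕ) (ρ : ℝ) : ENNReal :=
  ∑' v : Fin n → A,
    ENNReal.ofReal ((B ^ (2 * n) * (qEven (List.ofFn fun i => (v i : ℕ)) : ℝ) ^ 2) ^ (-ρ))

/-- `s_{n,B}(𝒜) = inf {ρ ≥ 0 : f_{n,B}(ρ) ≤ 1}`. -/
noncomputable def snB (A : Set ℕ) (B : ℝ) (n : ℕ) : ℝ :=
  sInf {ρ : ℝ | 0 ≤ ρ ∧ fnB A B n ρ ≤ 1}

/-- `q_n(x)`: denominator of the `n`-th convergent of `x`. -/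
noncomputable def qden (x : ℝ) : ℕ → ℤ
  | 0 => 1
  | 1 => cfa 1 x
  | (n + 2) => cfa (n + 2) x * qden x (n + 1) + qden x n

/-- `p_n(x)`: numerator of the `n`-th convergent of `x ∈ [0,1)`. -/
noncomputable def pnum (x : ℝ) : ℕ → ℤ
  | 0 => 0
  | 1 => 1
  | (n + 2) => cfa (n + 2) x * pnum x (n + 1) + pnum x n


open scoped NNReal ENNReal

section Aux

namespace CFaux

lemma gauss_mem {x : ℝ} (hx : x ∈ Set.Ioo (0:ℝ) 1) (hirr : Irrational x) :
    gaussMap x ∈ Set.Ioo (0:ℝ) 1 ∧ Irrational (gaussMap x) := by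
  have h1 : Irrational (1 / x) := by simpa [one_div] using hirr.inv
  have h2 : Irrational (gaussMap x) := by
    rw [gaussMap, Int.fract]; exact Irrational.sub_intCast h1 _
  refine ⟨⟨?_, ?_⟩, h2⟩
  · exact lt_of_le_of_ne (Int.fract_nonneg (1 / x)) (Ne.symm h2.ne_zero)
  · exact Int.fract_lt_one _

lemma iter_mem {x : ℝ} (hx : x ∈ Set.Ioo (0:ℝ) 1) (hirr : Irrational x) (m : ℕ) :
    gaussMap^[m] x ∈ Set.Ioo (0:ℝ) 1 ∧ Irrational (gaussMap^[m] x) := by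
  induction m with
  | zero => exact ⟨hx, hirr⟩
  | succ m ih =>
      rw [Function.iterate_succ_apply']
      exact gauss_mem ih.1 ih.2

lemma cfa_succ (x : ℝ) (m : ℕ) : cfa (m + 1) x = ⌊1 / (gaussMap^[m] x)⌋ := rfl

/-- `1 / X_m = a_{m+1} + X_{m+1}`. -/
lemma key {x : ℝ} (hx : x ∈ Set.Ioo (0:ℝ) 1) (hirr : Irrational x) (m : ℕ) :
    1 / (gaussMap^[m] x) = (cfa (m + 1) x : ℝ) + gaussMap^[m + 1] x := by
  rw [Function.iterate_succ_apply', cfa_succ, gaussMap, Int.fract]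
  ring

lemma one_le_cfa {x : ℝ} (hx : x ∈ Set.Ioo (0:ℝ) 1) (hirr : Irrational x) (m : ℕ) :
    1 ≤ cfa (m + 1) x := by
  obtain ⟨⟨h0, h1⟩, -⟩ := iter_mem hx hirr m
  rw [cfa_succ, Int.le_floor]
  push_cast
  rw [le_div_iff₀ h0, one_mul]
  exact h1.le

/-- `X_{m+1} < 1 / a_{m+2}` (strictly, by irrationality). -/
lemma iter_lt_inv_cfa {x : ℝ} (hx : x ∈ Set.Ioo (0:ℝ) 1) (hirr : Irrational x) (m : ℕ) :
    gaussMap^[m + 1] x < 1 / (cfa (m + 2) x : ℝ) := by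
  obtain ⟨⟨h0, h1⟩, hi⟩ := iter_mem hx hirr (m + 1)
  have hfl : ((cfa (m + 2) x : ℤ) : ℝ) < 1 / (gaussMap^[m + 1] x) := by
    rw [cfa_succ]
    exact lt_of_le_of_ne (Int.floor_le _) (by
      intro h
      exact ((by simpa [one_div] using hi.inv : Irrational (1 / gaussMap^[m+1] x))).ne_int _ h.symm)
  have ha : (0:ℝ) < (cfa (m + 2) x : ℝ) := by
    have := one_le_cfa hx hirr (m + 1)
    exact_mod_cast lt_of_lt_of_le zero_lt_one (by exact_mod_cast this)
  rw [lt_div_iff₀ ha]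
  rw [div_eq_mul_inv, lt_mul_inv_iff₀ h0] at hfl
  nlinarith


/-- Main convergent identity: `x (q_{m+1} + q_m X_{m+1}) = p_{m+1} + p_m X_{m+1}`. -/
lemma conv_identity {x : ℝ} (hx : x ∈ Set.Ioo (0:ℝ) 1) (hirr : Irrational x) (m : ℕ) :
    x * ((qden x (m + 1) : ℝ) + (qden x m : ℝ) * gaussMap^[m + 1] x)
      = (pnum x (m + 1) : ℝ) + (pnum x m : ℝ) * gaussMap^[m + 1] x := by
  induction m with
  | zero =>
      have h := key hx hirr 0
      simp only [Function.iterate_zero_apply] at h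
      have hx0 : x ≠ 0 := ne_of_gt hx.1
      have : (cfa 1 x : ℝ) + gaussMap^[1] x = 1 / x := h.symm
      show x * ((qden x 1 : ℝ) + (qden x 0 : ℝ) * gaussMap^[0+1] x)
          = (pnum x 1 : ℝ) + (pnum x 0 : ℝ) * gaussMap^[0+1] x
      simp only [qden, pnum, Int.cast_one, Int.cast_zero, one_mul, zero_mul, add_zero]
      rw [this]
      field_simp
  | succ m ih =>
      have hX : 1 / (gaussMap^[m + 1] x) = (cfa (m + 2) x : ℝ) + gaussMap^[m + 2] x :=
        key hx hirr (m + 1)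
      obtain ⟨⟨h0, -⟩, -⟩ := iter_mem hx hirr (m + 1)
      have hne : gaussMap^[m + 1] x ≠ 0 := ne_of_gt h0
      have hXe : gaussMap^[m + 1] x * ((cfa (m + 2) x : ℝ) + gaussMap^[m + 2] x) = 1 := by
        rw [← hX, mul_one_div, div_self hne]
      have hq : (qden x (m + 2) : ℝ)
          = (cfa (m + 2) x : ℝ) * (qden x (m + 1) : ℝ) + (qden x m : ℝ) := by
        show ((cfa (m + 2) x * qden x (m + 1) + qden x m : ℤ) : ℝ) = _
        push_cast; ring
      have hp : (pnum x (m + 2) : ℝ)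
          = (cfa (m + 2) x : ℝ) * (pnum x (m + 1) : ℝ) + (pnum x m : ℝ) := by
        show ((cfa (m + 2) x * pnum x (m + 1) + pnum x m : ℤ) : ℝ) = _
        push_cast; ring
      set A := (cfa (m + 2) x : ℝ)
      set X' := gaussMap^[m + 2] x
      set X := gaussMap^[m + 1] x
      -- multiply ih by (A + X')
      have h2 := congrArg (· * (A + X')) ih
      rw [hq, hp]
      linear_combination h2 - (x * (qden x m : ℝ) - (pnum x m : ℝ)) * hXe

lemma det_identity (x : ℝ) (m : ℕ) :
    pnum x (m + 1) * qden x m - pnum x m * qden x (m + 1) = (-1) ^ m := by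
  induction m with
  | zero => simp [qden, pnum]
  | succ m ih =>
      show pnum x (m + 2) * qden x (m + 1) - pnum x (m + 1) * qden x (m + 2) = _
      rw [show pnum x (m + 2) = cfa (m + 2) x * pnum x (m + 1) + pnum x m from rfl,
        show qden x (m + 2) = cfa (m + 2) x * qden x (m + 1) + qden x m from rfl]
      rw [pow_succ]
      nlinarith [ih]

lemma qden_pos {x : ℝ} (hx : x ∈ Set.Ioo (0:ℝ) 1) (hirr : Irrational x) :
    ∀ m, 1 ≤ qden x m := by
  have h : ∀ m, 1 ≤ qden x m ∧ 1 ≤ qden x (m + 1) := by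
    intro m
    induction m with
    | zero => exact ⟨le_refl _, one_le_cfa hx hirr 0⟩
    | succ m ih =>
        refine ⟨ih.2, ?_⟩
        show 1 ≤ cfa (m + 2) x * qden x (m + 1) + qden x m
        nlinarith [one_le_cfa hx hirr (m + 1), ih.1, ih.2]
  exact fun m => (h m).1

lemma qden_ge {x : ℝ} (hx : x ∈ Set.Ioo (0:ℝ) 1) (hirr : Irrational x) :
    ∀ m : ℕ, (m : ℤ) ≤ qden x m := by
  have h : ∀ m : ℕ, (m : ℤ) ≤ qden x m ∧ ((m : ℤ) + 1) ≤ qden x (m + 1) := by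
    intro m
    induction m with
    | zero => exact ⟨by simp [qden], by simpa [qden] using one_le_cfa hx hirr 0⟩
    | succ m ih =>
        refine ⟨by exact_mod_cast ih.2, ?_⟩
        show ((m : ℤ) + 1 + 1) ≤ cfa (m + 2) x * qden x (m + 1) + qden x m
        nlinarith [one_le_cfa hx hirr (m + 1), ih.1, ih.2, qden_pos hx hirr m]
  exact fun m => (h m).1

/-- The approximation inequality: `|x - p_{m+1}/q_{m+1}| < 1/(a_{m+2} q_{m+1}^2)`. -/
lemma approx {x : ℝ} (hx : x ∈ Set.Ioo (0:ℝ) 1) (hirr : Irrational x) (m : ℕ) :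
    |x - (pnum x (m + 1) : ℝ) / (qden x (m + 1) : ℝ)|
      < 1 / ((cfa (m + 2) x : ℝ) * (qden x (m + 1) : ℝ) ^ 2) := by
  obtain ⟨⟨hX0, hX1⟩, -⟩ := iter_mem hx hirr (m + 1)
  set X := gaussMap^[m + 1] x with hXdef
  have hq1 : (1 : ℝ) ≤ (qden x (m + 1) : ℝ) := by exact_mod_cast qden_pos hx hirr (m + 1)
  have hq0 : (1 : ℝ) ≤ (qden x m : ℝ) := by exact_mod_cast qden_pos hx hirr m
  have ha : (1 : ℝ) ≤ (cfa (m + 2) x : ℝ) := by exact_mod_cast one_le_cfa hx hirr (m + 1)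
  have hid := conv_identity hx hirr m
  have hdet : (pnum x (m + 1) : ℝ) * (qden x m : ℝ) - (pnum x m : ℝ) * (qden x (m + 1) : ℝ)
      = (-1 : ℝ) ^ m := by
    have := det_identity x m
    have := congrArg (fun z : ℤ => (z : ℝ)) this
    push_cast at this
    linarith [this]
  set P := (pnum x (m + 1) : ℝ)
  set P' := (pnum x m : ℝ)
  set Q := (qden x (m + 1) : ℝ)
  set Q' := (qden x m : ℝ)
  have hD : (0:ℝ) < Q + Q' * X := by nlinarith
  have hQne : Q ≠ 0 := by linarith
  have hDne : Q + Q' * X ≠ 0 := ne_of_gt hD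
  have hxq : x * (Q + Q' * X) = P + P' * X := hid
  have hxval : x = (P + P' * X) / (Q + Q' * X) := by
    rw [eq_div_iff hDne]; exact hxq
  have hsub : x - P / Q = X * (Q * P' - P * Q') / (Q * (Q + Q' * X)) := by
    rw [hxval, div_sub_div _ _ hDne hQne,
      show (P + P' * X) * Q - (Q + Q' * X) * P = X * (Q * P' - P * Q') from by ring,
      show (Q + Q' * X) * Q = Q * (Q + Q' * X) from by ring]
  have habs : |x - P / Q| = X / (Q * (Q + Q' * X)) := by
    rw [hsub, abs_div, abs_of_pos (by nlinarith : (0:ℝ) < Q * (Q + Q' * X))]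
    have : Q * P' - P * Q' = - ((-1:ℝ)^m) := by linarith [hdet]
    rw [this, abs_mul, abs_neg, abs_pow, abs_neg, abs_one, one_pow, mul_one,
      abs_of_pos hX0]
  rw [habs]
  have hXa : X < 1 / (cfa (m + 2) x : ℝ) := iter_lt_inv_cfa hx hirr m
  have ha0 : (0:ℝ) < (cfa (m + 2) x : ℝ) := by linarith
  rw [div_lt_div_iff₀ (by nlinarith) (by nlinarith)]
  rw [lt_div_iff₀ ha0] at hXa
  have h1 : (0:ℝ) < Q * (Q' * X) :=
    mul_pos (lt_of_lt_of_le one_pos hq1) (mul_pos (lt_of_lt_of_le one_pos hq0) hX0)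
  have h2 : (0:ℝ) < Q ^ 2 * (1 - X * (cfa (m + 2) x : ℝ)) :=
    mul_pos (pow_pos (lt_of_lt_of_le one_pos hq1) 2) (by linarith)
  nlinarith


lemma qden_mono {x : ℝ} (hx : x ∈ Set.Ioo (0:ℝ) 1) (hirr : Irrational x) (m : ℕ) :
    qden x m ≤ qden x (m + 1) := by
  cases m with
  | zero => simpa [qden] using one_le_cfa hx hirr 0
  | succ m =>
      show qden x (m + 1) ≤ cfa (m + 2) x * qden x (m + 1) + qden x m
      nlinarith [one_le_cfa hx hirr (m + 1), qden_pos hx hirr m, qden_pos hx hirr (m + 1)]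

/-- If from index `m₀` on there are no large partial quotients, `qden` grows at most
doubly exponentially with fixed base. -/
lemma qden_growth {x : ℝ} (hx : x ∈ Set.Ioo (0:ℝ) 1) (hirr : Irrational x)
    (N m₀ : ℕ) (H : ∀ m, m₀ ≤ m → cfa (m + 2) x ≤ qden x (m + 1) ^ N) :
    ∀ j : ℕ, qden x (m₀ + j + 1) ≤ (qden x (m₀ + 1) + 1) ^ ((N + 2) ^ j) := by
  set K : ℤ := qden x (m₀ + 1) + 1 with hK
  have hK2 : (2:ℤ) ≤ K := by have := qden_pos hx hirr (m₀ + 1); omega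
  have hK1 : (1:ℤ) ≤ K := by omega
  intro j
  induction j with
  | zero => simp [hK]
  | succ j ih =>
      have hqpos : ∀ m, (1:ℤ) ≤ qden x m := qden_pos hx hirr
      have hEpos : 1 ≤ (N + 2) ^ j := Nat.one_le_pow _ _ (by omega)
      have hq1 : (1:ℤ) ≤ qden x (m₀ + j + 1) := hqpos _
      have hKE : (1:ℤ) ≤ K ^ ((N + 2) ^ j) := one_le_pow₀ hK1
      have ha : cfa (m₀ + j + 2) x ≤ qden x (m₀ + j + 1) ^ N := by
        have := H (m₀ + j) (Nat.le_add_right _ _)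
        simpa [add_assoc] using this
      have hrec : qden x (m₀ + j + 2)
          = cfa (m₀ + j + 2) x * qden x (m₀ + j + 1) + qden x (m₀ + j) := rfl
      have hmono : qden x (m₀ + j) ≤ qden x (m₀ + j + 1) := qden_mono hx hirr _
      have step1 : qden x (m₀ + j + 2) ≤ 2 * qden x (m₀ + j + 1) ^ (N + 1) := by
        rw [hrec]
        have h1 : cfa (m₀ + j + 2) x * qden x (m₀ + j + 1)
            ≤ qden x (m₀ + j + 1) ^ (N + 1) := by
          calc cfa (m₀ + j + 2) x * qden x (m₀ + j + 1)
              ≤ qden x (m₀ + j + 1) ^ N * qden x (m₀ + j + 1) :=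
                mul_le_mul_of_nonneg_right ha (by linarith)
            _ = qden x (m₀ + j + 1) ^ (N + 1) := by rw [pow_succ]
        have h2 : qden x (m₀ + j) ≤ qden x (m₀ + j + 1) ^ (N + 1) :=
          le_trans hmono (le_self_pow₀ hq1 (by omega))
        linarith
      have step2 : qden x (m₀ + j + 1) ^ (N + 1) ≤ (K ^ ((N + 2) ^ j)) ^ (N + 1) :=
        pow_le_pow_left₀ (by linarith) ih _
      have step3 : 2 * (K ^ ((N + 2) ^ j)) ^ (N + 1) ≤ K ^ ((N + 2) ^ (j + 1)) := by
        rw [← pow_mul]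
        calc 2 * K ^ ((N + 2) ^ j * (N + 1)) ≤ K * K ^ ((N + 2) ^ j * (N + 1)) :=
              mul_le_mul_of_nonneg_right hK2 (by positivity)
          _ = K ^ ((N + 2) ^ j * (N + 1) + 1) := by rw [pow_succ']
          _ ≤ K ^ ((N + 2) ^ (j + 1)) := by
              apply pow_le_pow_right₀ hK1
              have : (N + 2) ^ (j + 1) = (N + 2) ^ j * (N + 1) + (N + 2) ^ j := by ring
              omega
      have : qden x (m₀ + (j + 1) + 1) = qden x (m₀ + j + 2) := by ring_nf
      rw [this]
      calc qden x (m₀ + j + 2) ≤ 2 * qden x (m₀ + j + 1) ^ (N + 1) := step1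
        _ ≤ 2 * (K ^ ((N + 2) ^ j)) ^ (N + 1) := by linarith
        _ ≤ K ^ ((N + 2) ^ (j + 1)) := step3


lemma eventually_pow_lt_exp_exp (K : ℤ) (hK : 2 ≤ K) (N : ℕ) :
    ∀ᶠ n : ℕ in atTop,
      ((K : ℝ)) ^ ((N + 2) ^ (2 * n)) < Real.exp (Real.exp (2 * n * ((N:ℝ) + 2))) := by
  set r : ℝ := (N : ℝ) + 2 with hrdef
  have hr0 : (0:ℝ) < r := by positivity
  have hKR : (2:ℝ) ≤ (K:ℝ) := by exact_mod_cast hK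
  have hK0 : (0:ℝ) < (K:ℝ) := by linarith
  have hlogK : 0 < Real.log (K:ℝ) := Real.log_pos (by linarith)
  have hlogr : Real.log r < r := by
    have := Real.log_le_sub_one_of_pos hr0; linarith
  have htend : Tendsto (fun n : ℕ => Real.exp (2 * n * (r - Real.log r))) atTop atTop := by
    apply Real.tendsto_exp_atTop.comp
    have h2 : Tendsto (fun n : ℕ => (n:ℝ) * (2 * (r - Real.log r))) atTop atTop :=
      tendsto_natCast_atTop_atTop.atTop_mul_const (by linarith)
    refine h2.congr (fun n => by ring)
  filter_upwards [htend.eventually_gt_atTop (Real.log (K:ℝ))] with n hn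
  have e1 : ((K : ℝ)) ^ ((N + 2) ^ (2 * n))
      = Real.exp ((((N + 2) ^ (2 * n) : ℕ) : ℝ) * Real.log (K:ℝ)) := by
    rw [Real.exp_nat_mul, Real.exp_log hK0]
  have e2 : (((N + 2) ^ (2 * n) : ℕ) : ℝ) = Real.exp (2 * n * Real.log r) := by
    push_cast
    rw [show (2:ℝ) * n * Real.log r = ((2*n : ℕ):ℝ) * Real.log r by push_cast; ring,
      Real.exp_nat_mul, Real.exp_log hr0, hrdef]
  rw [e1, e2, Real.exp_lt_exp]
  calc Real.exp (2 * n * Real.log r) * Real.log (K:ℝ)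
      < Real.exp (2 * n * Real.log r) * Real.exp (2 * n * (r - Real.log r)) := by
        exact (mul_lt_mul_iff_right₀ (Real.exp_pos _)).mpr hn
    _ = Real.exp (2 * n * r) := by rw [← Real.exp_add]; ring_nf



open Filter in
/-- Main arithmetic consequence: arbitrarily large convergent denominators admitting a huge
next partial quotient. -/
lemma exists_good {x : ℝ} (hx : x ∈ Set.Ioo (0:ℝ) 1) (hirr : Irrational x) (N : ℕ)
    (hfr : ∀ B₀ : ℕ, ∃ n : ℕ, B₀ ≤ n ∧
      Real.exp (Real.exp (2 * n * ((N:ℝ) + 2))) ≤ (cfa (2 * n) x : ℝ)) :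
    ∀ B : ℕ, ∃ m : ℕ, (B : ℤ) ≤ qden x (m + 1) ∧
      qden x (m + 1) ^ N ≤ cfa (m + 2) x := by
  intro B
  by_contra hcon
  push_neg at hcon
  have H : ∀ m, B ≤ m → cfa (m + 2) x ≤ qden x (m + 1) ^ N := by
    intro m hm
    have hq : (B : ℤ) ≤ qden x (m + 1) := by
      have := qden_ge hx hirr (m + 1)
      have h2 : (B : ℤ) ≤ ((m:ℤ) + 1) := by exact_mod_cast Nat.le_succ_of_le hm
      push_cast at this ⊢
      linarith
    exact le_of_lt (hcon m hq)
  set K : ℤ := qden x (B + 1) + 1 with hKdef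
  have hK2 : (2:ℤ) ≤ K := by have := qden_pos hx hirr (B + 1); omega
  obtain ⟨n₀, hn₀⟩ := (eventually_pow_lt_exp_exp K hK2 N).exists_forall_of_atTop
  obtain ⟨n, hn, hbig⟩ := hfr (max n₀ (B + 2))
  have hnn0 : n₀ ≤ n := le_trans (le_max_left _ _) hn
  have hnB : B + 2 ≤ n := le_trans (le_max_right _ _) hn
  set j : ℕ := 2 * n - B - 2 with hjdef
  have hj : B + j + 2 = 2 * n := by omega
  have hgrow := qden_growth hx hirr N B H j
  have hq0 : (0:ℤ) ≤ qden x (B + j + 1) := le_trans zero_le_one (qden_pos hx hirr _)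
  have hchain : cfa (2 * n) x ≤ K ^ ((N + 2) ^ (2 * n)) := by
    have h1 : cfa (2 * n) x ≤ qden x (B + j + 1) ^ N := by
      have := H (B + j) (Nat.le_add_right _ _)
      rw [show B + j + 2 = 2 * n from hj] at this
      convert this using 3
    have h2 : qden x (B + j + 1) ^ N ≤ (K ^ ((N + 2) ^ j)) ^ N :=
      pow_le_pow_left₀ hq0 hgrow N
    have h3 : (K ^ ((N + 2) ^ j)) ^ N ≤ K ^ ((N + 2) ^ (2 * n)) := by
      rw [← pow_mul]
      apply pow_le_pow_right₀ (by omega : (1:ℤ) ≤ K)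
      calc (N + 2) ^ j * N ≤ (N + 2) ^ j * (N + 2) := by
            exact Nat.mul_le_mul_left _ (by omega)
        _ = (N + 2) ^ (j + 1) := (pow_succ _ _).symm
        _ ≤ (N + 2) ^ (2 * n) := Nat.pow_le_pow_right (by omega) (by omega)
    linarith
  have hlt := hn₀ n hnn0
  have hchainR : ((cfa (2 * n) x : ℤ) : ℝ) ≤ ((K : ℝ)) ^ ((N + 2) ^ (2 * n)) := by
    have : ((cfa (2*n) x : ℤ) : ℝ) ≤ ((K ^ ((N + 2) ^ (2 * n)) : ℤ) : ℝ) := by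
      exact_mod_cast hchain
    push_cast at this ⊢
    linarith
  linarith [hbig.trans hchainR, hlt]



end CFaux

theorem CFaux.cover_dimH (S : Set ℝ) (N : ℕ) (hN : 1 ≤ N) (d : ℝ≥0) (hd0 : 0 < d) (hd1 : d ≤ 1)
    (hNd : 3 ≤ (N : ℝ) * d)
    (hS : ∀ x ∈ S, ∀ B : ℕ, ∃ b : ℕ, B ≤ b ∧ 2 ≤ b ∧ ∃ a : ℤ,
      |x - (a : ℝ) / b| ≤ 1 / (b : ℝ) ^ N ∧ -(b : ℤ) ≤ a ∧ a ≤ 2 * b) :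
    μH[(d : ℝ)] S = 0 := by
  classical
  set cond : ℕ → ℕ × ℤ → Prop := fun B p =>
    B ≤ p.1 ∧ 2 ≤ p.1 ∧ -(p.1 : ℤ) ≤ p.2 ∧ p.2 ≤ 2 * p.1 with hcond
  set t : ℕ → ℕ × ℤ → Set ℝ := fun B p =>
    if cond B p then Metric.closedBall ((p.2 : ℝ) / p.1) (1 / (p.1 : ℝ) ^ N) else ∅ with ht
  set r : ℕ → ℝ≥0∞ := fun B => ENNReal.ofReal (2 / (B : ℝ) ^ N) with hrdef
  have hr : Tendsto r atTop (𝓝 0) := by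
    have h0 : Tendsto (fun B : ℕ => 2 / (B : ℝ) ^ N) atTop (𝓝 0) := by
      apply Tendsto.div_atTop tendsto_const_nhds
      exact (tendsto_pow_atTop (by omega)).comp tendsto_natCast_atTop_atTop
    simpa using ENNReal.tendsto_ofReal h0
  -- diameter control
  have hdiam2 : ∀ B p, cond B p → EMetric.diam (t B p) ≤ ENNReal.ofReal (2 / (p.1 : ℝ) ^ N) := by
    intro B p hc
    simp only [ht]
    rw [if_pos hc]
    have hrad : (0:ℝ) ≤ 1 / (p.1 : ℝ) ^ N := by positivity
    rw [← Metric.emetric_closedBall hrad]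
    refine le_trans EMetric.diam_closedBall ?_
    rw [← ENNReal.ofReal_ofNat, ← ENNReal.ofReal_mul (by norm_num)]
    apply ENNReal.ofReal_le_ofReal
    rw [mul_one_div]
  have hdiam : ∀ B p, 1 ≤ B → EMetric.diam (t B p) ≤ r B := by
    intro B p hB
    by_cases hc : cond B p
    · refine le_trans (hdiam2 B p hc) (ENNReal.ofReal_le_ofReal ?_)
      obtain ⟨h1, h2, -, -⟩ := hc
      apply div_le_div_of_nonneg_left (by norm_num) (by positivity)
      exact pow_le_pow_left₀ (by positivity) (by exact_mod_cast h1) N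
    · simp only [ht]
      rw [if_neg hc]
      exact (Metric.ediam_empty (X := ℝ)).trans_le zero_le
  -- the comparison series
  set G : ℕ → ℝ≥0∞ := fun b => ENNReal.ofReal (8 / (b : ℝ) ^ 2) with hGdef
  have hGsum : ∑' b, G b ≠ ⊤ := by
    have hsum : Summable (fun b : ℕ => 8 / (b : ℝ) ^ 2) := by
      have := (Real.summable_one_div_nat_pow (p := 2)).2 (by norm_num)
      simpa [div_eq_mul_inv, one_div] using this.mul_left 8
    rw [← ENNReal.ofReal_tsum_of_nonneg (fun b => by positivity) hsum]
    exact ENNReal.ofReal_ne_top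
  -- key termwise bound: for 2 ≤ b, (3b+1) * (ofReal (2/b^N))^d ≤ G b
  have hterm : ∀ b : ℕ, 2 ≤ b →
      ((3 * b + 1 : ℕ) : ℝ≥0∞) * (ENNReal.ofReal (2 / (b : ℝ) ^ N)) ^ (d : ℝ) ≤ G b := by
    intro b hb
    have hb1 : (1:ℝ) ≤ (b:ℝ) := by exact_mod_cast Nat.one_le_of_lt hb
    have hb0 : (0:ℝ) < (b:ℝ) := by linarith
    have hx0 : (0:ℝ) ≤ 2 / (b:ℝ) ^ N := by positivity
    rw [ENNReal.ofReal_rpow_of_nonneg hx0 (by positivity), ← ENNReal.ofReal_natCast,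
      ← ENNReal.ofReal_mul (by positivity)]
    apply ENNReal.ofReal_le_ofReal
    -- real inequality
    have e1 : (2 / (b:ℝ) ^ N) ^ (d:ℝ) = (2:ℝ) ^ (d:ℝ) / ((b:ℝ) ^ N) ^ (d:ℝ) :=
      Real.div_rpow (by norm_num) (by positivity) _
    have e2 : ((b:ℝ) ^ N) ^ (d:ℝ) = (b:ℝ) ^ ((N:ℝ) * (d:ℝ)) := by
      rw [← Real.rpow_natCast (b:ℝ) N, ← Real.rpow_mul (by positivity)]
    have h2d : (2:ℝ) ^ (d:ℝ) ≤ 2 := by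
      calc (2:ℝ) ^ (d:ℝ) ≤ (2:ℝ) ^ (1:ℝ) :=
            Real.rpow_le_rpow_of_exponent_le one_le_two (by exact_mod_cast hd1)
        _ = 2 := Real.rpow_one 2
    have hbN : (b:ℝ) ^ (3:ℝ) ≤ (b:ℝ) ^ ((N:ℝ) * (d:ℝ)) :=
      Real.rpow_le_rpow_of_exponent_le hb1 hNd
    have hb3 : (b:ℝ) ^ (3:ℝ) = (b:ℝ) ^ (3:ℕ) := by
      rw [← Real.rpow_natCast (b:ℝ) 3]; norm_num
    have hcard : ((3 * b + 1 : ℕ) : ℝ) ≤ 4 * (b:ℝ) := by push_cast; linarith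
    have hpos : (0:ℝ) < (b:ℝ) ^ ((N:ℝ) * (d:ℝ)) := Real.rpow_pos_of_pos hb0 _
    calc ((3 * b + 1 : ℕ) : ℝ) * (2 / (b:ℝ) ^ N) ^ (d:ℝ)
        = ((3 * b + 1 : ℕ) : ℝ) * ((2:ℝ) ^ (d:ℝ) / (b:ℝ) ^ ((N:ℝ) * (d:ℝ))) := by
          rw [e1, e2]
      _ ≤ 4 * (b:ℝ) * (2 / (b:ℝ) ^ (3:ℕ)) := by
          apply mul_le_mul hcard ?_ (by positivity) (by linarith)
          apply div_le_div₀ (by norm_num) h2d (by positivity)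
          rw [← hb3]; exact hbN
      _ = 8 / (b:ℝ) ^ 2 := by
          field_simp
          ring
  -- per-B summation bound
  have hd0R : (0:ℝ) < (d:ℝ) := by exact_mod_cast hd0
  have hsum_le : ∀ B : ℕ, (∑' p : ℕ × ℤ, EMetric.diam (t B p) ^ (d:ℝ))
      ≤ ∑' (b : {b : ℕ // b ∉ Finset.range B}), G (b : ℕ) := by
    intro B
    have step1 : (∑' p : ℕ × ℤ, EMetric.diam (t B p) ^ (d:ℝ))
        ≤ ∑' p : ℕ × ℤ,
            (if cond B p then (ENNReal.ofReal (2 / (p.1:ℝ) ^ N)) ^ (d:ℝ) else 0) := by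
      apply ENNReal.tsum_le_tsum
      intro p
      by_cases hc : cond B p
      · rw [if_pos hc]
        exact ENNReal.rpow_le_rpow (hdiam2 B p hc) hd0R.le
      · rw [if_neg hc]
        have he : t B p = ∅ := if_neg hc
        rw [he]; exact (ENNReal.rpow_le_rpow (Metric.ediam_empty (X := ℝ)).le hd0R.le).trans (ENNReal.zero_rpow_of_pos hd0R).le
    have step2 : (∑' p : ℕ × ℤ,
          (if cond B p then (ENNReal.ofReal (2 / (p.1:ℝ) ^ N)) ^ (d:ℝ) else 0))
        = ∑' b : ℕ, ∑' a : ℤ,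
            (if cond B (b, a) then (ENNReal.ofReal (2 / (b:ℝ) ^ N)) ^ (d:ℝ) else 0) :=
      ENNReal.tsum_prod (f := fun b a =>
        (if cond B (b, a) then (ENNReal.ofReal (2 / (b:ℝ) ^ N)) ^ (d:ℝ) else 0))
    have step3 : ∀ b : ℕ,
        (∑' a : ℤ, (if cond B (b, a) then (ENNReal.ofReal (2 / (b:ℝ) ^ N)) ^ (d:ℝ) else 0))
        ≤ (if b ∈ Finset.range B then 0 else G b) := by
      intro b
      by_cases hbB : b ∈ Finset.range B
      · have : ∀ a : ℤ, ¬ cond B (b, a) := by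
          intro a hcc
          exact absurd hcc.1 (by simpa using Finset.mem_range.mp hbB |> Nat.not_le_of_lt)
        rw [if_pos hbB]
        simp only [this, if_false]
        simp
      · rw [if_neg hbB]
        have hBb : B ≤ b := Nat.le_of_not_lt (fun h => hbB (Finset.mem_range.mpr h))
        by_cases hb2 : 2 ≤ b
        · set c : ℝ≥0∞ := (ENNReal.ofReal (2 / (b:ℝ) ^ N)) ^ (d:ℝ) with hcdef
          have hzero : ∀ a : ℤ, a ∉ Finset.Icc (-(b:ℤ)) (2 * b) →
              (if cond B (b, a) then c else 0) = 0 := by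
            intro a ha
            rw [if_neg]
            intro hcc
            exact ha (Finset.mem_Icc.mpr ⟨hcc.2.2.1, hcc.2.2.2⟩)
          rw [tsum_eq_sum hzero]
          have hcard : (Finset.Icc (-(b:ℤ)) (2 * b)).card = 3 * b + 1 := by
            rw [Int.card_Icc]
            omega
          calc (∑ a ∈ Finset.Icc (-(b:ℤ)) (2 * b), (if cond B (b, a) then c else 0))
              ≤ ∑ _a ∈ Finset.Icc (-(b:ℤ)) (2 * b), c := by
                apply Finset.sum_le_sum
                intro a _
                split_ifs <;> simp
            _ = ((3 * b + 1 : ℕ) : ℝ≥0∞) * c := by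
                rw [Finset.sum_const, hcard, nsmul_eq_mul]
            _ ≤ G b := hterm b hb2
        · have : ∀ a : ℤ, ¬ cond B (b, a) := fun a hcc => hb2 hcc.2.1
          simp only [this, if_false]
          simp
    calc (∑' p : ℕ × ℤ, EMetric.diam (t B p) ^ (d:ℝ))
        ≤ ∑' b : ℕ, ∑' a : ℤ,
            (if cond B (b, a) then (ENNReal.ofReal (2 / (b:ℝ) ^ N)) ^ (d:ℝ) else 0) := by
          rw [← step2]; exact step1
      _ ≤ ∑' b : ℕ, (if b ∈ Finset.range B then 0 else G b) := ENNReal.tsum_le_tsum step3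
      _ = ∑' b : ℕ, Set.indicator {b : ℕ | b ∉ Finset.range B} G b :=
          tsum_congr (fun b => by
            by_cases hbB : b ∈ Finset.range B
            · simp [Set.indicator_apply, hbB, Nat.not_le.mpr (Finset.mem_range.mp hbB)]
            · simp [Set.indicator_apply, hbB,
                Nat.le_of_not_lt (fun h => hbB (Finset.mem_range.mpr h))])
      _ = ∑' (b : {b : ℕ // b ∉ Finset.range B}), G (b : ℕ) := (tsum_subtype _ G).symm
  -- assemble
  have hst : ∀ᶠ B in atTop, S ⊆ ⋃ p : ℕ × ℤ, t B p := by
    apply Eventually.of_forall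
    intro B x hx
    obtain ⟨b, hBb, hb2, a, hclose, ha1, ha2⟩ := hS x hx B
    refine Set.mem_iUnion.mpr ⟨(b, a), ?_⟩
    simp only [ht]
    rw [if_pos ⟨hBb, hb2, ha1, ha2⟩]
    rw [Metric.mem_closedBall, Real.dist_eq]
    simpa [one_div] using hclose
  have htB : ∀ᶠ B in atTop, ∀ p, EMetric.diam (t B p) ≤ r B := by
    filter_upwards [eventually_ge_atTop 1] with B hB p
    exact hdiam B p hB
  have h1 : μH[(d:ℝ)] S ≤ liminf (fun B => ∑' p : ℕ × ℤ, EMetric.diam (t B p) ^ (d:ℝ)) atTop :=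
    MeasureTheory.Measure.hausdorffMeasure_le_liminf_tsum (d:ℝ) S r hr t htB hst
  have h3 : Tendsto (fun B : ℕ => ∑' (b : {b : ℕ // b ∉ Finset.range B}), G (b : ℕ))
      atTop (𝓝 0) :=
    (ENNReal.tendsto_tsum_compl_atTop_zero hGsum).comp tendsto_finset_range
  have h2 : liminf (fun B => ∑' p : ℕ × ℤ, EMetric.diam (t B p) ^ (d:ℝ)) atTop
      ≤ liminf (fun B : ℕ => ∑' (b : {b : ℕ // b ∉ Finset.range B}), G (b : ℕ)) atTop :=
    liminf_le_liminf (Eventually.of_forall hsum_le)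
  rw [h3.liminf_eq] at h2
  exact le_antisymm (le_trans h1 h2) zero_le

lemma CFaux.phi_big (φ : ℕ → ℝ) (hφ : ∀ n, 0 < φ n)
    (hB : Filter.liminf (fun n : ℕ => ((Real.log (φ n) / (2 * n) : ℝ) : EReal)) atTop = ⊤)
    (hb : Filter.liminf
        (fun n : ℕ => ((Real.log (Real.log (φ n)) / (2 * n) : ℝ) : EReal)) atTop = ⊤)
    (M : ℝ) :
    ∀ᶠ n : ℕ in atTop, Real.exp (Real.exp (2 * n * M)) ≤ φ n := by
  have h1 : ∀ᶠ n : ℕ in atTop,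
      ((M : ℝ) : EReal) < ((Real.log (Real.log (φ n)) / (2 * n) : ℝ) : EReal) :=
    eventually_lt_of_lt_liminf (by rw [hb]; exact EReal.coe_lt_top M)
  have h2 : ∀ᶠ n : ℕ in atTop,
      ((1 : ℝ) : EReal) < ((Real.log (φ n) / (2 * n) : ℝ) : EReal) :=
    eventually_lt_of_lt_liminf (by rw [hB]; exact EReal.coe_lt_top 1)
  filter_upwards [h1, h2, eventually_ge_atTop 1] with n hn1 hn2 hn3
  rw [EReal.coe_lt_coe_iff] at hn1 hn2
  have h2n : (0:ℝ) < 2 * n := by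
    have : (1:ℝ) ≤ (n:ℝ) := by exact_mod_cast hn3
    linarith
  have hlog : 2 * (n:ℝ) < Real.log (φ n) := by
    have := (one_lt_div h2n).mp hn2
    linarith
  have hlogpos : 0 < Real.log (φ n) := by linarith
  have hloglog : 2 * (n:ℝ) * M ≤ Real.log (Real.log (φ n)) := by
    have := (lt_div_iff₀ h2n).mp hn1
    linarith
  calc Real.exp (Real.exp (2 * n * M)) ≤ Real.exp (Real.exp (Real.log (Real.log (φ n)))) := by
        exact Real.exp_le_exp.mpr (Real.exp_le_exp.mpr hloglog)
    _ = Real.exp (Real.log (φ n)) := by rw [Real.exp_log hlogpos]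
    _ = φ n := Real.exp_log (hφ n)


open Filter in
lemma CFaux.good_rationals {x : ℝ} (hx : x ∈ Set.Ioo (0:ℝ) 1) (hirr : Irrational x)
    (N : ℕ) (hN : 1 ≤ N)
    (hfr : ∀ B₀ : ℕ, ∃ n : ℕ, B₀ ≤ n ∧
      Real.exp (Real.exp (2 * n * ((N:ℝ) + 2))) ≤ (cfa (2 * n) x : ℝ)) :
    ∀ B : ℕ, ∃ b : ℕ, B ≤ b ∧ 2 ≤ b ∧ ∃ a : ℤ,
      |x - (a : ℝ) / b| ≤ 1 / (b : ℝ) ^ N ∧ -(b : ℤ) ≤ a ∧ a ≤ 2 * b := by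
  intro B
  obtain ⟨m, hq, ha⟩ := CFaux.exists_good hx hirr N hfr (max B 2)
  set Q : ℤ := qden x (m + 1) with hQdef
  have hQ1 : 1 ≤ Q := CFaux.qden_pos hx hirr (m + 1)
  set b : ℕ := Q.toNat with hbdef
  have hbZ : (b : ℤ) = Q := Int.toNat_of_nonneg (by linarith)
  have hble : max B 2 ≤ b := by
    have : ((max B 2 : ℕ) : ℤ) ≤ (b : ℤ) := by rw [hbZ]; exact hq
    exact_mod_cast this
  have hB : B ≤ b := le_trans (le_max_left _ _) hble
  have hb2 : 2 ≤ b := le_trans (le_max_right _ _) hble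
  have hbR : ((b : ℕ) : ℝ) = ((Q : ℤ) : ℝ) := by exact_mod_cast congrArg (Int.cast : ℤ → ℝ) hbZ
  have hQR1 : (1:ℝ) ≤ ((Q : ℤ) : ℝ) := by exact_mod_cast hQ1
  have hbR2 : (2:ℝ) ≤ (b : ℝ) := by exact_mod_cast hb2
  refine ⟨b, hB, hb2, pnum x (m + 1), ?_, ?_, ?_⟩
  · -- approximation bound
    have happ := CFaux.approx hx hirr m
    have haR : ((Q : ℤ) : ℝ) ^ N ≤ ((cfa (m + 2) x : ℤ) : ℝ) := by exact_mod_cast ha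
    have hA1 : (1:ℝ) ≤ ((cfa (m + 2) x : ℤ) : ℝ) := by
      exact_mod_cast CFaux.one_le_cfa hx hirr (m + 1)
    have hQN : (0:ℝ) < ((Q : ℤ) : ℝ) ^ N := by positivity
    have hmul : ((Q : ℤ) : ℝ) ^ N ≤ ((cfa (m + 2) x : ℤ) : ℝ) * ((Q : ℤ) : ℝ) ^ 2 := by
      nlinarith [sq_nonneg (((Q : ℤ) : ℝ) - 1)]
    have : |x - (pnum x (m + 1) : ℝ) / ((Q : ℤ) : ℝ)|
        ≤ 1 / ((Q : ℤ) : ℝ) ^ N := by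
      refine le_trans happ.le ?_
      exact one_div_le_one_div_of_le hQN hmul
    rw [hbR]
    exact this
  · -- lower bound on a
    have happ2 : |x - (pnum x (m + 1) : ℝ) / (b : ℝ)| ≤ 1 / 2 := by
      have h1 : |x - (pnum x (m + 1) : ℝ) / (b : ℝ)| ≤ 1 / (b : ℝ) ^ N := by
        rw [hbR]
        refine le_trans (CFaux.approx hx hirr m).le ?_
        have haR : ((Q : ℤ) : ℝ) ^ N ≤ ((cfa (m + 2) x : ℤ) : ℝ) := by exact_mod_cast ha
        have hQN : (0:ℝ) < ((Q : ℤ) : ℝ) ^ N := by positivity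
        refine one_div_le_one_div_of_le hQN ?_
        nlinarith [sq_nonneg (((Q : ℤ) : ℝ) - 1),
          (by exact_mod_cast CFaux.one_le_cfa hx hirr (m + 1) : (1:ℝ) ≤ ((cfa (m + 2) x : ℤ) : ℝ))]
      refine le_trans h1 ?_
      have hbN : (2:ℝ) ≤ (b : ℝ) ^ N := le_trans hbR2 (le_self_pow₀ (by linarith) (by omega))
      exact one_div_le_one_div_of_le (by norm_num) hbN
    have hb0 : (0:ℝ) < (b : ℝ) := by linarith
    rw [abs_le] at happ2
    have hxlt : (0:ℝ) < x := hx.1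
    have h1 : -(1:ℝ) < (pnum x (m + 1) : ℝ) / (b : ℝ) := by linarith [happ2.2]
    have h1' : -(1:ℝ) * (b : ℝ) < (pnum x (m + 1) : ℝ) := (lt_div_iff₀ hb0).mp h1
    have h2 : ((-(b:ℤ) : ℤ) : ℝ) < (pnum x (m + 1) : ℝ) := by push_cast; linarith
    have : (-(b:ℤ)) < pnum x (m + 1) := by exact_mod_cast h2
    linarith
  · -- upper bound on a
    have happ2 : |x - (pnum x (m + 1) : ℝ) / (b : ℝ)| ≤ 1 / 2 := by
      have h1 : |x - (pnum x (m + 1) : ℝ) / (b : ℝ)| ≤ 1 / (b : ℝ) ^ N := by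
        rw [hbR]
        refine le_trans (CFaux.approx hx hirr m).le ?_
        have haR : ((Q : ℤ) : ℝ) ^ N ≤ ((cfa (m + 2) x : ℤ) : ℝ) := by exact_mod_cast ha
        have hQN : (0:ℝ) < ((Q : ℤ) : ℝ) ^ N := by positivity
        refine one_div_le_one_div_of_le hQN ?_
        nlinarith [sq_nonneg (((Q : ℤ) : ℝ) - 1),
          (by exact_mod_cast CFaux.one_le_cfa hx hirr (m + 1) : (1:ℝ) ≤ ((cfa (m + 2) x : ℤ) : ℝ))]
      refine le_trans h1 ?_
      have hbN : (2:ℝ) ≤ (b : ℝ) ^ N := le_trans hbR2 (le_self_pow₀ (by linarith) (by omega))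
      exact one_div_le_one_div_of_le (by norm_num) hbN
    have hb0 : (0:ℝ) < (b : ℝ) := by linarith
    rw [abs_le] at happ2
    have hxlt : x < 1 := hx.2
    have h1 : (pnum x (m + 1) : ℝ) / (b : ℝ) < 2 := by linarith [happ2.1]
    have h1' : (pnum x (m + 1) : ℝ) < 2 * (b : ℝ) := (div_lt_iff₀ hb0).mp h1
    have h2 : (pnum x (m + 1) : ℝ) < ((2 * (b:ℤ) : ℤ) : ℝ) := by push_cast; linarith
    have : pnum x (m + 1) < 2 * (b:ℤ) := by exact_mod_cast h2
    linarith


end Aux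

/-- Theorem 1.6, case `B = ∞`, `b = ∞`: if `liminf (log φ(n))/(2n) = ∞` and
`liminf (log log φ(n))/(2n) = ∞`, then `dim_H F(φ) = 0`. -/
theorem dimH_Fphi_case_b_infinite (φ : ℕ → ℝ) (hφ : ∀ n, 0 < φ n)
    (hB : Filter.liminf (fun n : ℕ => ((Real.log (φ n) / (2 * n) : ℝ) : EReal)) atTop = ⊤)
    (hb : Filter.liminf
        (fun n : ℕ => ((Real.log (Real.log (φ n)) / (2 * n) : ℝ) : EReal)) atTop = ⊤) :
    dimH {x | x ∈ Ieven ∧ ∃ᶠ n in atTop, φ n ≤ (cfa (2 * n) x : ℝ)} = 0 := by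
  set S : Set ℝ := {x | x ∈ Ieven ∧ ∃ᶠ n in atTop, φ n ≤ (cfa (2 * n) x : ℝ)} with hSdef
  -- main claim: Hausdorff measure vanishes in every small positive dimension
  have key : ∀ d : ℝ≥0, 0 < d → d ≤ 1 → μH[(d : ℝ)] S = 0 := by
    intro d hd0 hd1
    set N : ℕ := max 1 ⌈(3:ℝ) / (d:ℝ)⌉₊ with hNdef
    have hN1 : 1 ≤ N := le_max_left _ _
    have hd0R : (0:ℝ) < (d:ℝ) := by exact_mod_cast hd0
    have hNd : 3 ≤ (N : ℝ) * (d : ℝ) := by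
      have h1 : (3:ℝ) / (d:ℝ) ≤ (⌈(3:ℝ) / (d:ℝ)⌉₊ : ℝ) := Nat.le_ceil _
      have h2 : ((⌈(3:ℝ) / (d:ℝ)⌉₊ : ℕ) : ℝ) ≤ (N : ℝ) := by
        exact_mod_cast le_max_right 1 ⌈(3:ℝ) / (d:ℝ)⌉₊
      have h3 : (3:ℝ) / (d:ℝ) ≤ (N : ℝ) := le_trans h1 h2
      calc (3:ℝ) = ((3:ℝ) / (d:ℝ)) * (d:ℝ) := by field_simp
        _ ≤ (N : ℝ) * (d:ℝ) := mul_le_mul_of_nonneg_right h3 hd0R.le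
    apply CFaux.cover_dimH S N hN1 d hd0 hd1 hNd
    intro x hxS
    obtain ⟨⟨hxIco, hirr, -⟩, hfreq⟩ := hxS
    have hx : x ∈ Set.Ioo (0:ℝ) 1 := by
      refine ⟨lt_of_le_of_ne hxIco.1 (Ne.symm hirr.ne_zero), hxIco.2⟩
    have hev := CFaux.phi_big φ hφ hB hb ((N:ℝ) + 2)
    have hfr : ∀ B₀ : ℕ, ∃ n : ℕ, B₀ ≤ n ∧
        Real.exp (Real.exp (2 * (n:ℝ) * ((N:ℝ) + 2))) ≤ (cfa (2 * n) x : ℝ) := by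
      intro B₀
      have hf2 : ∃ᶠ n : ℕ in atTop,
          Real.exp (Real.exp (2 * (n:ℝ) * ((N:ℝ) + 2))) ≤ (cfa (2 * n) x : ℝ) := by
        refine (hfreq.and_eventually hev).mono ?_
        rintro n ⟨h1, h2⟩
        exact le_trans h2 h1
      exact frequently_atTop.mp hf2 B₀
    exact CFaux.good_rationals hx hirr N hN1 hfr
  refine le_antisymm ?_ zero_le
  by_contra hcon
  rw [not_le] at hcon
  obtain ⟨r, hr0, hrdim⟩ := ENNReal.lt_iff_exists_nnreal_btwn.mp hcon
  set d : ℝ≥0 := min r 1 with hddef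
  have hd0 : 0 < d := lt_min (by exact_mod_cast hr0) one_pos
  have hd1 : d ≤ 1 := min_le_right _ _
  have hdim_le : dimH S ≤ (d : ℝ≥0∞) :=
    dimH_le_of_hausdorffMeasure_ne_top (by rw [key d hd0 hd1]; exact ENNReal.zero_ne_top)
  have hdr : (d : ℝ≥0∞) ≤ (r : ℝ≥0∞) := by
    exact_mod_cast (min_le_left r 1 : d ≤ r)
  exact absurd (lt_of_le_of_lt (hdim_le.trans hdr) hrdim) (lt_irrefl _)
end

section
/- For every nonempty set 𝒜 of positive integers and every real number B > 1, the limit s_B(𝒜) = lim_{n→∞} s_{n,B}(𝒜) exists and satisfies 0 ≤ s_B(𝒜) ≤ 1. -/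
open Filter Topology MeasureTheory

namespace SBaux

def qstep : ℕ × ℕ → ℕ → ℕ × ℕ := fun p a => (p.2 + p.1, a * (p.2 + p.1) + p.2)

lemma qEven_eq (l : List ℕ) : qEven l = (l.foldl qstep (0, 1)).2 := rfl

lemma foldl_linear (l : List ℕ) (x y : ℕ) :
    l.foldl qstep (x, y) =
      (x * (l.foldl qstep (1, 0)).1 + y * (l.foldl qstep (0, 1)).1,
       x * (l.foldl qstep (1, 0)).2 + y * (l.foldl qstep (0, 1)).2) := by
  induction l generalizing x y with
  | nil => simp
  | cons a t ih =>
    have h1 : qstep (x, y) a = (y + x, a * (y + x) + y) := rfl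
    have h2 : qstep (1, 0) a = (1, a) := by simp [qstep]
    have h3 : qstep (0, 1) a = (1, a + 1) := by simp [qstep]
    rw [List.foldl_cons, List.foldl_cons, List.foldl_cons, h1, h2, h3,
      ih, ih 1 a, ih 1 (a + 1)]
    simp only [Prod.mk.injEq]
    constructor <;> ring

lemma foldl_snd_mono : ∀ (l : List ℕ) (s s' : ℕ × ℕ), s.1 ≤ s'.1 → s.2 ≤ s'.2 →
    (l.foldl qstep s).1 ≤ (l.foldl qstep s').1 ∧ (l.foldl qstep s).2 ≤ (l.foldl qstep s').2 := by
  intro l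
  induction l with
  | nil => intro s s' h1 h2; exact ⟨h1, h2⟩
  | cons a t ih =>
    intro s s' h1 h2
    refine ih (qstep s a) (qstep s' a) ?_ ?_
    · simp only [qstep]; omega
    · simp only [qstep]
      exact Nat.add_le_add (Nat.mul_le_mul_left a (by omega)) h2

lemma one_le_qEven (l : List ℕ) : 1 ≤ qEven l := by
  suffices h : ∀ (l : List ℕ) (s : ℕ × ℕ), 1 ≤ s.2 → 1 ≤ (l.foldl qstep s).2 by
    exact h l (0, 1) le_rfl
  intro l
  induction l with
  | nil => intro s hs; exact hs
  | cons a t ih => intro s hs; exact ih _ (by simp [qstep]; omega)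

lemma pe_le_qe (l : List ℕ) : (l.foldl qstep (1, 0)).2 ≤ qEven l := by
  cases l with
  | nil => simp [qEven_eq, qstep]
  | cons a t =>
    rw [qEven_eq, List.foldl_cons, List.foldl_cons]
    have h2 : qstep (1, 0) a = (1, a) := by simp [qstep]
    have h3 : qstep (0, 1) a = (1, a + 1) := by simp [qstep]
    rw [h2, h3]
    exact (foldl_snd_mono t (1, a) (1, a + 1) le_rfl (by omega)).2

lemma qEven_cons (a : ℕ) (t : List ℕ) :
    qEven (a :: t) = (t.foldl qstep (1, 0)).2 + (a + 1) * qEven t := by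
  rw [qEven_eq, List.foldl_cons]
  have h3 : qstep (0, 1) a = (1, a + 1) := by simp [qstep]
  rw [h3, foldl_linear]
  simp [qEven_eq]

lemma qEven_cons_le (a : ℕ) (t : List ℕ) : qEven (a :: t) ≤ 2 * (a + 1) * qEven t := by
  rw [qEven_cons]
  have := pe_le_qe t
  nlinarith [one_le_qEven t]

lemma le_qEven_cons (a : ℕ) (t : List ℕ) : (a + 1) * qEven t ≤ qEven (a :: t) := by
  rw [qEven_cons]; omega

lemma mul_qEven_le_append (l l' : List ℕ) : qEven l * qEven l' ≤ qEven (l ++ l') := by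
  rw [qEven_eq (l ++ l'), List.foldl_append]
  have h := foldl_linear l' (l.foldl qstep (0, 1)).1 (l.foldl qstep (0, 1)).2
  rw [Prod.mk.eta] at h
  rw [h]
  simp only [← qEven_eq]
  exact Nat.le_add_left _ _

lemma prod_le_qEven (l : List ℕ) : (l.map (· + 1)).prod ≤ qEven l := by
  induction l with
  | nil => simp [qEven]
  | cons a t ih =>
    rw [List.map_cons, List.prod_cons]
    calc (a + 1) * (t.map (· + 1)).prod ≤ (a + 1) * qEven t := Nat.mul_le_mul_left _ ih
    _ ≤ qEven (a :: t) := le_qEven_cons a t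



lemma rpow_neg_le_rpow_neg {x y ρ : ℝ} (hx : 0 < x) (hxy : x ≤ y) (hρ : 0 ≤ ρ) :
    y ^ (-ρ) ≤ x ^ (-ρ) := by
  rw [Real.rpow_neg hx.le, Real.rpow_neg (hx.trans_le hxy).le]
  exact inv_anti₀ (Real.rpow_pos_of_pos hx ρ) (Real.rpow_le_rpow hx.le hxy hρ)

section

variable {A : Set ℕ} {B : ℝ} (hB : 1 < B)

include hB

lemma one_le_base (n q : ℕ) (hq : 1 ≤ q) : 1 ≤ B ^ (2 * n) * ((q : ℝ)) ^ 2 := by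
  have h1 : (1 : ℝ) ≤ B ^ (2 * n) := one_le_pow₀ hB.le
  have h2 : (1 : ℝ) ≤ (q : ℝ) := by exact_mod_cast hq
  nlinarith

lemma fnB_anti {n : ℕ} {ρ ρ' : ℝ} (h : ρ ≤ ρ') : fnB A B n ρ' ≤ fnB A B n ρ := by
  refine ENNReal.tsum_le_tsum fun v => ENNReal.ofReal_le_ofReal ?_
  exact Real.rpow_le_rpow_of_exponent_le
    (one_le_base hB n _ (one_le_qEven _)) (by linarith)

lemma fnB_zero (ρ : ℝ) : fnB A B 0 ρ = 1 := by
  rw [fnB]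
  rw [tsum_eq_single (fun i => (i.elim0 : A)) (fun v hv => absurd (Subsingleton.elim v _) hv)]
  norm_num [qEven]

lemma fnB_submul (m n : ℕ) {ρ : ℝ} (hρ : 0 ≤ ρ) :
    fnB A B (m + n) ρ ≤ fnB A B m ρ * fnB A B n ρ := by
  rw [fnB, ← (Fin.appendEquiv (α := A) m n).tsum_eq, ENNReal.tsum_prod']
  have key : ∀ (v : Fin m → A) (w : Fin n → A),
      ENNReal.ofReal ((B ^ (2 * (m + n)) *
          (qEven (List.ofFn fun i => ((Fin.appendEquiv (α := A) m n (v, w)) i : ℕ)) : ℝ) ^ 2)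
        ^ (-ρ)) ≤
      ENNReal.ofReal ((B ^ (2 * m) * (qEven (List.ofFn fun i => (v i : ℕ)) : ℝ) ^ 2) ^ (-ρ)) *
      ENNReal.ofReal ((B ^ (2 * n) * (qEven (List.ofFn fun i => (w i : ℕ)) : ℝ) ^ 2) ^ (-ρ)) := by
    intro v w
    set lv := List.ofFn fun i => (v i : ℕ)
    set lw := List.ofFn fun i => (w i : ℕ)
    have hlist : (List.ofFn fun i => ((Fin.appendEquiv (α := A) m n (v, w)) i : ℕ)) = lv ++ lw := by
      show (List.ofFn fun i => ((Fin.append v w) i : ℕ)) = lv ++ lw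
      rw [show (fun i => ((Fin.append v w) i : ℕ)) = (fun (a : A) => (a : ℕ)) ∘ Fin.append v w
          from rfl]
      rw [← List.map_ofFn, List.ofFn_fin_append, List.map_append, List.map_ofFn, List.map_ofFn]
      rfl
    rw [hlist]
    set x := B ^ (2 * m) * ((qEven lv : ℝ)) ^ 2 with hx
    set y := B ^ (2 * n) * ((qEven lw : ℝ)) ^ 2 with hy
    have hx1 : 1 ≤ x := one_le_base hB m _ (one_le_qEven _)
    have hy1 : 1 ≤ y := one_le_base hB n _ (one_le_qEven _)
    have hxy : x * y ≤ B ^ (2 * (m + n)) * ((qEven (lv ++ lw) : ℝ)) ^ 2 := by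
      have hq : (qEven lv : ℝ) * qEven lw ≤ (qEven (lv ++ lw) : ℝ) := by
        exact_mod_cast mul_qEven_le_append lv lw
      have hq0 : (0:ℝ) ≤ (qEven lv : ℝ) * qEven lw := by positivity
      have hB0 : (0:ℝ) < B := lt_trans one_pos hB
      rw [hx, hy]
      calc B ^ (2 * m) * (qEven lv : ℝ) ^ 2 * (B ^ (2 * n) * (qEven lw : ℝ) ^ 2)
          = B ^ (2 * (m + n)) * ((qEven lv : ℝ) * qEven lw) ^ 2 := by ring
        _ ≤ B ^ (2 * (m + n)) * ((qEven (lv ++ lw) : ℝ)) ^ 2 := by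
            have : ((qEven lv : ℝ) * qEven lw) ^ 2 ≤ ((qEven (lv ++ lw) : ℝ)) ^ 2 := by
              exact pow_le_pow_left₀ hq0 hq 2
            exact mul_le_mul_of_nonneg_left this (by positivity)
    calc ENNReal.ofReal ((B ^ (2 * (m + n)) * ((qEven (lv ++ lw) : ℝ)) ^ 2) ^ (-ρ))
        ≤ ENNReal.ofReal ((x * y) ^ (-ρ)) := by
          refine ENNReal.ofReal_le_ofReal
            (rpow_neg_le_rpow_neg (by positivity) hxy hρ)
      _ = ENNReal.ofReal (x ^ (-ρ)) * ENNReal.ofReal (y ^ (-ρ)) := by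
          rw [Real.mul_rpow (by positivity) (by positivity),
            ENNReal.ofReal_mul (by positivity)]
  calc ∑' (v : Fin m → A) (w : Fin n → A),
      ENNReal.ofReal ((B ^ (2 * (m + n)) *
        (qEven (List.ofFn fun i => ((Fin.appendEquiv (α := A) m n (v, w)) i : ℕ)) : ℝ) ^ 2) ^ (-ρ))
      ≤ ∑' (v : Fin m → A) (w : Fin n → A),
        (ENNReal.ofReal ((B ^ (2 * m) * (qEven (List.ofFn fun i => (v i : ℕ)) : ℝ) ^ 2) ^ (-ρ)) *
         ENNReal.ofReal ((B ^ (2 * n) * (qEven (List.ofFn fun i => (w i : ℕ)) : ℝ) ^ 2) ^ (-ρ))) :=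
        ENNReal.tsum_le_tsum fun v => ENNReal.tsum_le_tsum fun w => key v w
    _ = fnB A B m ρ * fnB A B n ρ := by
        rw [fnB, fnB, ← ENNReal.tsum_mul_right]
        exact tsum_congr fun v => by rw [ENNReal.tsum_mul_left]

end

lemma base_pos {B : ℝ} (hB : 1 < B) (n : ℕ) (l : List ℕ) :
    0 < B ^ (2 * n) * ((qEven l : ℝ)) ^ 2 := by
  have hB0 : (0 : ℝ) < B := lt_trans one_pos hB
  have h2 : (0 : ℝ) < (qEven l : ℝ) := by exact_mod_cast Nat.lt_of_lt_of_le Nat.zero_lt_one (one_le_qEven l)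
  positivity

lemma qEven_singleton (a : ℕ) : qEven [a] = a + 1 := by simp [qEven]

lemma fnB_one (A : Set ℕ) (B : ℝ) (ρ : ℝ) :
    fnB A B 1 ρ = ∑' a : A, ENNReal.ofReal ((B ^ 2 * (((a : ℕ) : ℝ) + 1) ^ 2) ^ (-ρ)) := by
  rw [fnB, ← (Equiv.funUnique (Fin 1) A).symm.tsum_eq]
  refine tsum_congr fun a => ?_
  have h1 : (List.ofFn fun i : Fin 1 =>
      (((Equiv.funUnique (Fin 1) A).symm a) i : ℕ)) = [(a : ℕ)] := by
    simp [List.ofFn_succ]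
  rw [h1, qEven_singleton]
  push_cast
  norm_num

lemma tsum_tele : (∑' a : ℕ, ENNReal.ofReal (((a : ℝ))⁻¹ - ((a : ℝ) + 1)⁻¹)) ≤ 1 := by
  have key : ∀ N : ℕ, 1 ≤ N →
      (∑ a ∈ Finset.range N, ENNReal.ofReal (((a : ℝ))⁻¹ - ((a : ℝ) + 1)⁻¹))
        + ENNReal.ofReal ((N : ℝ)⁻¹) ≤ 1 := by
    intro N hN
    induction N with
    | zero => omega
    | succ N ih =>
      rcases Nat.eq_zero_or_pos N with h0 | h1
      · subst h0
        have h00 : ENNReal.ofReal ((((0:ℕ):ℝ))⁻¹ - (((0:ℕ):ℝ) + 1)⁻¹) = 0 := by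
          apply ENNReal.ofReal_of_nonpos; norm_num
        rw [Finset.sum_range_one, h00]
        norm_num
      · have hNpos : (0 : ℝ) < (N : ℝ) := by exact_mod_cast h1
        have hsub : (0 : ℝ) ≤ ((N : ℝ))⁻¹ - ((N : ℝ) + 1)⁻¹ := by
          have : ((N : ℝ) + 1)⁻¹ ≤ ((N : ℝ))⁻¹ := by
            apply inv_anti₀ hNpos; linarith
          linarith
        have step : ENNReal.ofReal (((N : ℝ))⁻¹ - ((N : ℝ) + 1)⁻¹)
            + ENNReal.ofReal ((((N : ℕ) + 1 : ℕ) : ℝ)⁻¹) = ENNReal.ofReal (((N : ℝ))⁻¹) := by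
          push_cast
          rw [← ENNReal.ofReal_add hsub (by positivity), sub_add_cancel]
        calc (∑ a ∈ Finset.range (N + 1), ENNReal.ofReal (((a : ℝ))⁻¹ - ((a : ℝ) + 1)⁻¹))
              + ENNReal.ofReal ((((N : ℕ) + 1 : ℕ) : ℝ)⁻¹)
            = (∑ a ∈ Finset.range N, ENNReal.ofReal (((a : ℝ))⁻¹ - ((a : ℝ) + 1)⁻¹))
              + (ENNReal.ofReal (((N : ℝ))⁻¹ - ((N : ℝ) + 1)⁻¹)
                + ENNReal.ofReal ((((N : ℕ) + 1 : ℕ) : ℝ)⁻¹)) := by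
              rw [Finset.sum_range_succ, add_assoc]
          _ = (∑ a ∈ Finset.range N, ENNReal.ofReal (((a : ℝ))⁻¹ - ((a : ℝ) + 1)⁻¹))
              + ENNReal.ofReal (((N : ℝ))⁻¹) := by rw [step]
          _ ≤ 1 := ih h1
  rw [ENNReal.tsum_eq_iSup_sum]
  refine iSup_le fun s => ?_
  obtain ⟨N, hs⟩ := Finset.exists_nat_subset_range s
  calc ∑ a ∈ s, ENNReal.ofReal (((a : ℝ))⁻¹ - ((a : ℝ) + 1)⁻¹)
      ≤ ∑ a ∈ Finset.range (max N 1), ENNReal.ofReal (((a : ℝ))⁻¹ - ((a : ℝ) + 1)⁻¹) :=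
        Finset.sum_le_sum_of_subset (hs.trans (Finset.range_subset_range.2 (le_max_left _ _)))
    _ ≤ _ + ENNReal.ofReal (((max N 1 : ℕ) : ℝ)⁻¹) := le_self_add
    _ ≤ 1 := key _ (le_max_right _ _)

lemma fnB_one_one_le {A : Set ℕ} {B : ℝ} (hA1 : ∀ a ∈ A, 1 ≤ a) (hB : 1 < B) :
    fnB A B 1 1 ≤ 1 := by
  rw [fnB_one]
  have hterm : ∀ a : A, ENNReal.ofReal ((B ^ 2 * (((a : ℕ) : ℝ) + 1) ^ 2) ^ (-(1:ℝ)))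
      ≤ ENNReal.ofReal ((((a : ℕ) : ℝ))⁻¹ - (((a : ℕ) : ℝ) + 1)⁻¹) := by
    intro a
    set x : ℝ := ((a : ℕ) : ℝ) with hxdef
    have hx1 : (1 : ℝ) ≤ x := by
      rw [hxdef]; exact_mod_cast hA1 a a.2
    have hx0 : (0 : ℝ) < x := by linarith
    refine ENNReal.ofReal_le_ofReal ?_
    rw [Real.rpow_neg_one]
    have heq : x⁻¹ - (x + 1)⁻¹ = (x * (x + 1))⁻¹ := by
      field_simp
      ring
    rw [heq]
    apply inv_anti₀ (by positivity)
    have hB1 : (1 : ℝ) ≤ B ^ 2 := one_le_pow₀ hB.le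
    calc x * (x + 1) ≤ (x + 1) * (x + 1) := by nlinarith
      _ = 1 * (x + 1) ^ 2 := by ring
      _ ≤ B ^ 2 * (x + 1) ^ 2 := mul_le_mul_of_nonneg_right hB1 (by positivity)
  calc (∑' a : A, ENNReal.ofReal ((B ^ 2 * (((a : ℕ) : ℝ) + 1) ^ 2) ^ (-(1:ℝ))))
      ≤ ∑' a : A, ENNReal.ofReal ((((a : ℕ) : ℝ))⁻¹ - (((a : ℕ) : ℝ) + 1)⁻¹) :=
        ENNReal.tsum_le_tsum hterm
    _ ≤ ∑' n : ℕ, ENNReal.ofReal (((n : ℝ))⁻¹ - ((n : ℝ) + 1)⁻¹) :=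
        ENNReal.tsum_comp_le_tsum_of_injective Subtype.val_injective _
    _ ≤ 1 := tsum_tele

lemma fnB_le_one_at_one {A : Set ℕ} {B : ℝ} (hA1 : ∀ a ∈ A, 1 ≤ a) (hB : 1 < B) (n : ℕ) :
    fnB A B n 1 ≤ 1 := by
  induction n with
  | zero => rw [fnB_zero hB]
  | succ n ih =>
    calc fnB A B (n + 1) 1 ≤ fnB A B n 1 * fnB A B 1 1 := fnB_submul hB n 1 zero_le_one
      _ ≤ 1 := mul_le_one' ih (fnB_one_one_le hA1 hB)

lemma fnB_contract {A : Set ℕ} {B : ℝ} (hB : 1 < B) (n : ℕ) (ρ : ℝ) {δ : ℝ} (hδ : 0 ≤ δ) :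
    fnB A B n (ρ + δ) ≤ ENNReal.ofReal ((B ^ (2 * n) : ℝ) ^ (-δ)) * fnB A B n ρ := by
  rw [fnB, fnB, ← ENNReal.tsum_mul_left]
  refine ENNReal.tsum_le_tsum fun v => ?_
  set x : ℝ := B ^ (2 * n) * ((qEven (List.ofFn fun i => (v i : ℕ)) : ℝ)) ^ 2 with hxdef
  have hx1 : 1 ≤ x := one_le_base hB n _ (one_le_qEven _)
  have hBn : (0 : ℝ) < B ^ (2 * n) := by positivity
  have hBnx : B ^ (2 * n) ≤ x := by
    have hq : (1 : ℝ) ≤ ((qEven (List.ofFn fun i => (v i : ℕ)) : ℝ)) ^ 2 := by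
      have := one_le_qEven (List.ofFn fun i => (v i : ℕ))
      have h2 : (1:ℝ) ≤ (qEven (List.ofFn fun i => (v i : ℕ)) : ℝ) := by exact_mod_cast this
      nlinarith
    nlinarith
  have hsplit : x ^ (-(ρ + δ)) = x ^ (-δ) * x ^ (-ρ) := by
    rw [← Real.rpow_add (by linarith), neg_add]; ring_nf
  rw [hsplit, ENNReal.ofReal_mul (by positivity)]
  exact mul_le_mul_left (ENNReal.ofReal_le_ofReal
    (rpow_neg_le_rpow_neg hBn hBnx hδ)) _

lemma fnB_decomp {A : Set ℕ} {B : ℝ} (hB : 1 < B) (k r n : ℕ) {ρ : ℝ} (hρ : 0 ≤ ρ) :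
    fnB A B (k * n + r) ρ ≤ (fnB A B n ρ) ^ k * fnB A B r ρ := by
  induction k with
  | zero => simp
  | succ k ih =>
    have h1 : (k + 1) * n + r = n + (k * n + r) := by ring
    rw [h1]
    calc fnB A B (n + (k * n + r)) ρ ≤ fnB A B n ρ * fnB A B (k * n + r) ρ :=
          fnB_submul hB n (k * n + r) hρ
      _ ≤ fnB A B n ρ * ((fnB A B n ρ) ^ k * fnB A B r ρ) := mul_le_mul_right ih _
      _ = (fnB A B n ρ) ^ (k + 1) * fnB A B r ρ := by ring

lemma fnB_pow {A : Set ℕ} {B : ℝ} (hB : 1 < B) (r : ℕ) {ρ : ℝ} (hρ : 0 ≤ ρ) :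
    fnB A B r ρ ≤ (fnB A B 1 ρ) ^ r := by
  have := fnB_decomp (A := A) hB r 0 1 hρ
  rw [mul_one, add_zero, fnB_zero (A := A) hB, mul_one] at this
  exact this

lemma fnB_one_lt_top {A : Set ℕ} {B : ℝ} (hA : A.Nonempty) (hB : 1 < B) {n : ℕ} {ρ : ℝ}
    (hn : 0 < n) (hρ : 0 ≤ ρ) (h : fnB A B n ρ ≤ 1) : fnB A B 1 ρ < ⊤ := by
  obtain ⟨m, rfl⟩ : ∃ m, n = m + 1 := ⟨n - 1, by omega⟩
  set c₀ : A := ⟨hA.choose, hA.choose_spec⟩ with hc₀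
  set l₀ : List ℕ := List.ofFn (fun _ : Fin m => (c₀ : ℕ)) with hl₀
  set xc : ℝ := B ^ (2 * m) * (2 * (qEven l₀ : ℝ)) ^ 2 with hxc
  have hxc0 : 0 < xc := by
    have := one_le_qEven l₀
    have h2 : (1:ℝ) ≤ (qEven l₀ : ℝ) := by exact_mod_cast this
    have hB0 : (0:ℝ) < B := lt_trans one_pos hB
    positivity
  set c : ENNReal := ENNReal.ofReal (xc ^ (-ρ)) with hc
  have hc0 : 0 < c := ENNReal.ofReal_pos.2 (Real.rpow_pos_of_pos hxc0 _)
  set ι : A → (Fin (m + 1) → A) := fun a => Fin.cons a (fun _ => c₀) with hι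
  have hinj : Function.Injective ι := by
    intro a b hab
    have := congrFun hab 0
    simpa [hι] using this
  have hlist : ∀ a : A, (List.ofFn fun i => ((ι a) i : ℕ)) = (a : ℕ) :: l₀ := by
    intro a
    rw [List.ofFn_succ]
    simp [hι, hl₀]
  have hterm : ∀ a : A,
      c * ENNReal.ofReal ((B ^ 2 * (((a : ℕ) : ℝ) + 1) ^ 2) ^ (-ρ)) ≤
      ENNReal.ofReal ((B ^ (2 * (m + 1)) *
        (qEven (List.ofFn fun i => ((ι a) i : ℕ)) : ℝ) ^ 2) ^ (-ρ)) := by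
    intro a
    rw [hlist a]
    set ya : ℝ := B ^ 2 * (((a : ℕ) : ℝ) + 1) ^ 2 with hya
    have hya0 : 0 < ya := by
      have hB0 : (0:ℝ) < B := lt_trans one_pos hB
      positivity
    have hbound : B ^ (2 * (m + 1)) * ((qEven ((a : ℕ) :: l₀) : ℝ)) ^ 2 ≤ xc * ya := by
      have hq : (qEven ((a : ℕ) :: l₀) : ℝ) ≤ 2 * ((a : ℕ) + 1) * (qEven l₀ : ℝ) := by
        exact_mod_cast qEven_cons_le (a : ℕ) l₀
      have hq0 : (0:ℝ) ≤ (qEven ((a : ℕ) :: l₀) : ℝ) := by positivity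
      have hB0 : (0:ℝ) < B := lt_trans one_pos hB
      have h2 : ((qEven ((a : ℕ) :: l₀) : ℝ)) ^ 2 ≤ (2 * ((a : ℕ) + 1) * (qEven l₀ : ℝ)) ^ 2 :=
        pow_le_pow_left₀ hq0 hq 2
      calc B ^ (2 * (m + 1)) * ((qEven ((a : ℕ) :: l₀) : ℝ)) ^ 2
          ≤ B ^ (2 * (m + 1)) * (2 * ((a : ℕ) + 1) * (qEven l₀ : ℝ)) ^ 2 :=
            mul_le_mul_of_nonneg_left h2 (by positivity)
        _ = xc * ya := by rw [hxc, hya]; ring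
    calc c * ENNReal.ofReal (ya ^ (-ρ))
        = ENNReal.ofReal (xc ^ (-ρ) * ya ^ (-ρ)) := by
          rw [ENNReal.ofReal_mul (by positivity)]
      _ = ENNReal.ofReal ((xc * ya) ^ (-ρ)) := by
          rw [Real.mul_rpow hxc0.le hya0.le]
      _ ≤ _ := ENNReal.ofReal_le_ofReal (rpow_neg_le_rpow_neg (base_pos hB (m + 1) _) hbound hρ)
  have hmain : c * fnB A B 1 ρ ≤ 1 := by
    calc c * fnB A B 1 ρ
        = ∑' a : A, c * ENNReal.ofReal ((B ^ 2 * (((a : ℕ) : ℝ) + 1) ^ 2) ^ (-ρ)) := by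
          rw [fnB_one, ENNReal.tsum_mul_left]
      _ ≤ ∑' a : A, ENNReal.ofReal ((B ^ (2 * (m + 1)) *
            (qEven (List.ofFn fun i => ((ι a) i : ℕ)) : ℝ) ^ 2) ^ (-ρ)) :=
          ENNReal.tsum_le_tsum hterm
      _ ≤ fnB A B (m + 1) ρ := ENNReal.tsum_comp_le_tsum_of_injective hinj _
      _ ≤ 1 := h
  have : fnB A B 1 ρ ≤ c⁻¹ := by
    rw [ENNReal.le_inv_iff_mul_le]
    rw [mul_comm] at hmain
    exact hmain
  exact lt_of_le_of_lt this (ENNReal.inv_lt_top.2 hc0)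

end SBaux

open SBaux

/-- Lemma 2.5: for any nonempty set `𝒜` of positive integers and `B > 1`, the limit
`s_B(𝒜) = lim_n s_{n,B}(𝒜)` exists and lies in `[0, 1]`. -/
theorem sB_limit_exists (A : Set ℕ) (hA : A.Nonempty) (hA1 : ∀ a ∈ A, 1 ≤ a)
    (B : ℝ) (hB : 1 < B) :
    ∃ s : ℝ, 0 ≤ s ∧ s ≤ 1 ∧ Tendsto (fun n => snB A B n) atTop (nhds s) := by
  have hmem1 : ∀ n, (1 : ℝ) ∈ {ρ : ℝ | 0 ≤ ρ ∧ fnB A B n ρ ≤ 1} :=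
    fun n => ⟨zero_le_one, fnB_le_one_at_one hA1 hB n⟩
  have hbdd : ∀ n, BddBelow {ρ : ℝ | 0 ≤ ρ ∧ fnB A B n ρ ≤ 1} :=
    fun n => ⟨0, fun ρ hρ => hρ.1⟩
  have hs0 : ∀ n, 0 ≤ snB A B n := fun n => le_csInf ⟨1, hmem1 n⟩ (fun ρ hρ => hρ.1)
  have hs1 : ∀ n, snB A B n ≤ 1 := fun n => csInf_le (hbdd n) (hmem1 n)
  have hle_one : ∀ n (ρ : ℝ), snB A B n < ρ → fnB A B n ρ ≤ 1 := by
    intro n ρ hρ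
    obtain ⟨ρ', hρ'S, hρ'lt⟩ := exists_lt_of_csInf_lt ⟨1, hmem1 n⟩ hρ
    exact le_trans (fnB_anti hB hρ'lt.le) hρ'S.2
  set L : ℝ := ⨅ n : ℕ, snB A B (n + 1) with hL
  have hbddL : BddBelow (Set.range fun n : ℕ => snB A B (n + 1)) :=
    ⟨0, by rintro x ⟨n, rfl⟩; exact hs0 _⟩
  have hL0 : 0 ≤ L := le_ciInf fun n => hs0 _
  have hL1 : L ≤ 1 := le_trans (ciInf_le hbddL 0) (hs1 1)
  have hLle : ∀ m : ℕ, 1 ≤ m → L ≤ snB A B m := by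
    intro m hm
    obtain ⟨m', rfl⟩ : ∃ m', m = m' + 1 := ⟨m - 1, by omega⟩
    exact ciInf_le hbddL m'
  refine ⟨L, hL0, hL1, ?_⟩
  rw [Metric.tendsto_atTop]
  intro ε hε
  obtain ⟨n', hn'⟩ := exists_lt_of_ciInf_lt (show L < L + ε / 4 by linarith)
  set n₀ := n' + 1 with hn₀
  have hn₀pos : 0 < n₀ := Nat.succ_pos _
  set ρ₁ : ℝ := L + ε / 4 with hρ₁
  set ρs : ℝ := L + ε / 2 with hρs
  have hρ₁s : snB A B n₀ < ρ₁ := hn'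
  have hρ₁0 : 0 ≤ ρ₁ := le_trans (hs0 n₀) hρ₁s.le
  have hρs0 : 0 ≤ ρs := by rw [hρs]; linarith
  have hρ₁ρs : ρ₁ ≤ ρs := by rw [hρ₁, hρs]; linarith
  set θ : ENNReal := ENNReal.ofReal ((B ^ (2 * n₀) : ℝ) ^ (-(ε / 4))) with hθ
  have hθ1 : θ < 1 := by
    rw [hθ, ← ENNReal.ofReal_one]
    refine (ENNReal.ofReal_lt_ofReal_iff (by norm_num)).2 ?_
    apply Real.rpow_lt_one_of_one_lt_of_neg
    · exact one_lt_pow₀ hB (by omega)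
    · linarith
  have hFn₀ : fnB A B n₀ ρs ≤ θ := by
    have h2 : ρs = ρ₁ + ε / 4 := by rw [hρs, hρ₁]; ring
    rw [h2]
    calc fnB A B n₀ (ρ₁ + ε / 4) ≤ θ * fnB A B n₀ ρ₁ := fnB_contract hB n₀ ρ₁ (by linarith)
      _ ≤ θ * 1 := mul_le_mul_right (hle_one n₀ ρ₁ hρ₁s) θ
      _ = θ := mul_one θ
  have hF1 : fnB A B 1 ρs < ⊤ :=
    lt_of_le_of_lt (fnB_anti hB hρ₁ρs) (fnB_one_lt_top hA hB hn₀pos hρ₁0 (hle_one n₀ ρ₁ hρ₁s))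
  set C : ENNReal := (max 1 (fnB A B 1 ρs)) ^ n₀ with hC
  have hC1 : (1 : ENNReal) ≤ C := one_le_pow_of_one_le' (le_max_left _ _) n₀
  have hCtop : C ≠ ⊤ := by
    rw [hC]
    exact ENNReal.pow_ne_top (max_lt ENNReal.one_lt_top hF1).ne
  have hC0 : C ≠ 0 := (lt_of_lt_of_le zero_lt_one hC1).ne'
  have hCinv : 0 < C⁻¹ := ENNReal.inv_pos.2 hCtop
  obtain ⟨k₀, hk₀⟩ : ∃ k₀, θ ^ k₀ ≤ C⁻¹ := by
    have ht := ENNReal.tendsto_pow_atTop_nhds_zero_of_lt_one hθ1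
    exact (ht.eventually (Iio_mem_nhds hCinv)).exists.imp fun k hk => hk.le
  refine ⟨n₀ * (k₀ + 1), fun m hm => ?_⟩
  have hm1 : 1 ≤ m := by
    have h2 : n₀ ≤ n₀ * (k₀ + 1) := Nat.le_mul_of_pos_right _ (Nat.succ_pos _)
    omega
  have hk : k₀ ≤ m / n₀ := by
    have h3 : k₀ + 1 ≤ m / n₀ := by
      rw [Nat.le_div_iff_mul_le hn₀pos, Nat.mul_comm]
      exact hm
    omega
  have hdecomp : fnB A B m ρs ≤ (fnB A B n₀ ρs) ^ (m / n₀) * fnB A B (m % n₀) ρs := by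
    have h4 := fnB_decomp (A := A) hB (m / n₀) (m % n₀) n₀ hρs0
    rwa [Nat.div_add_mod' m n₀] at h4
  have hrem : fnB A B (m % n₀) ρs ≤ C := by
    calc fnB A B (m % n₀) ρs ≤ (fnB A B 1 ρs) ^ (m % n₀) := fnB_pow hB _ hρs0
      _ ≤ (max 1 (fnB A B 1 ρs)) ^ (m % n₀) := pow_le_pow_left' (le_max_right _ _) _
      _ ≤ C := pow_le_pow_right' (le_max_left _ _) (Nat.mod_lt m hn₀pos).le
  have hFm : fnB A B m ρs ≤ 1 := by
    calc fnB A B m ρs ≤ (fnB A B n₀ ρs) ^ (m / n₀) * fnB A B (m % n₀) ρs := hdecomp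
      _ ≤ θ ^ (m / n₀) * C := mul_le_mul' (pow_le_pow_left' hFn₀ _) hrem
      _ ≤ θ ^ k₀ * C := mul_le_mul_left (pow_le_pow_right_of_le_one' hθ1.le hk) _
      _ ≤ C⁻¹ * C := mul_le_mul_left hk₀ _
      _ = 1 := ENNReal.inv_mul_cancel hC0 hCtop
  have hsm : snB A B m ≤ ρs := csInf_le (hbdd m) ⟨hρs0, hFm⟩
  have hsmL : L ≤ snB A B m := hLle m hm1
  rw [Real.dist_eq, abs_of_nonneg (by linarith)]
  rw [hρs] at hsm
  linarith
end

section
/- The function B ↦ s_B is continuous on the interval (1, ∞), and the right limit lim_{B→1⁺} s_B exists. -/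
open Filter Topology MeasureTheory

/-! ### Auxiliary lemmas -/

section Aux

lemma qEven_aux (l : List ℕ) (p : ℕ × ℕ) :
    p.2 * (l.map (· + 1)).prod ≤ (l.foldl (fun p a => (p.2 + p.1, a * (p.2 + p.1) + p.2)) p).2 := by
  induction l generalizing p with
  | nil => simp
  | cons a t ih =>
    simp only [List.foldl_cons, List.map_cons, List.prod_cons]
    refine le_trans ?_ (ih _)
    have h : p.2 * (a + 1) ≤ a * (p.2 + p.1) + p.2 := by nlinarith
    calc p.2 * ((a + 1) * (t.map (· + 1)).prod)
        = (p.2 * (a + 1)) * (t.map (· + 1)).prod := by ring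
      _ ≤ (a * (p.2 + p.1) + p.2) * (t.map (· + 1)).prod := Nat.mul_le_mul_right _ h

lemma prod_le_qEven (l : List ℕ) : (l.map (· + 1)).prod ≤ qEven l := by
  simpa [qEven] using qEven_aux l (0, 1)

lemma one_le_qEven (l : List ℕ) : 1 ≤ qEven l :=
  le_trans (List.one_le_prod_of_one_le (by simp)) (prod_le_qEven l)

lemma qEven_ofFn_ge {n : ℕ} (v : Fin n → ℕ) :
    ∏ i, (v i + 1) ≤ qEven (List.ofFn v) := by
  have := prod_le_qEven (List.ofFn v)
  rwa [List.map_ofFn, List.prod_ofFn] at this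

lemma qEven_pow4 {n : ℕ} (v : Fin n → ℕ) :
    ∏ i, (v i * (v i + 1)) ≤ (qEven (List.ofFn v)) ^ 4 := by
  calc ∏ i, (v i * (v i + 1)) ≤ ∏ i, (v i + 1) ^ 4 := by
        refine Finset.prod_le_prod' fun i _ => ?_
        calc v i * (v i + 1) ≤ (v i + 1) * (v i + 1) := Nat.mul_le_mul_right _ (Nat.le_succ _)
          _ = (v i + 1) ^ 2 := (sq (v i + 1)).symm
          _ ≤ (v i + 1) ^ 4 := Nat.pow_le_pow_right (Nat.succ_le_succ (Nat.zero_le _)) (by norm_num)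
    _ = (∏ i, (v i + 1)) ^ 4 := by rw [Finset.prod_pow]
    _ ≤ (qEven (List.ofFn v)) ^ 4 := Nat.pow_le_pow_left (qEven_ofFn_ge v) 4

lemma sum_range_telescope (N : ℕ) :
    ∑ m ∈ Finset.range N, (1 : ℝ) / (m * (m + 1)) ≤ 1 - 1 / N := by
  induction N with
  | zero => simp
  | succ N ih =>
    rw [Finset.sum_range_succ]
    rcases Nat.eq_zero_or_pos N with h | h
    · subst h; norm_num
    · have hN : (0 : ℝ) < N := by exact_mod_cast h
      have : (1:ℝ) / (N * (N+1)) = 1 / N - 1 / (N+1) := by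
        field_simp
        ring
      push_cast
      rw [this]
      linarith [ih]

lemma sum_w_nat : ∑' m : ℕ, ENNReal.ofReal ((1 : ℝ) / (m * (m + 1))) ≤ 1 := by
  rw [ENNReal.tsum_eq_iSup_sum]
  refine iSup_le fun s => ?_
  obtain ⟨N, hN⟩ := s.exists_nat_subset_range
  calc ∑ m ∈ s, ENNReal.ofReal ((1 : ℝ) / (m * (m + 1)))
      ≤ ∑ m ∈ Finset.range N, ENNReal.ofReal ((1 : ℝ) / (m * (m + 1))) :=
        Finset.sum_le_sum_of_subset hN
    _ = ENNReal.ofReal (∑ m ∈ Finset.range N, (1 : ℝ) / (m * (m + 1))) := by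
        rw [ENNReal.ofReal_sum_of_nonneg]
        intro i _; positivity
    _ ≤ 1 := by
        rw [← ENNReal.ofReal_one]
        refine ENNReal.ofReal_le_ofReal ?_
        have := sum_range_telescope N
        have h0 : (0:ℝ) ≤ 1 / N := by positivity
        linarith

lemma sum_w_A (A : Set ℕ) :
    ∑' a : A, ENNReal.ofReal ((1 : ℝ) / ((a : ℕ) * ((a : ℕ) + 1))) ≤ 1 :=
  le_trans (Summable.tsum_le_tsum_of_inj (fun a : A => (a : ℕ)) Subtype.val_injective
    (fun _ _ => zero_le) (fun _ => le_rfl) ENNReal.summable ENNReal.summable) sum_w_nat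

lemma tsum_pi_prod {α : Type*} (w : α → ENNReal) (n : ℕ) :
    ∑' v : Fin n → α, ∏ i, w (v i) = (∑' a, w a) ^ n := by
  induction n with
  | zero =>
    rw [pow_zero]
    have h : ∀ v : Fin 0 → α, ∏ i, w (v i) = 1 := fun v => by simp
    simp only [h]
    exact tsum_eq_single (fun i => i.elim0) (fun b hb => (hb (Subsingleton.elim b _)).elim)
  | succ n ih =>
    rw [pow_succ]
    rw [← Equiv.tsum_eq (Fin.consEquiv fun _ => α) (fun v => ∏ i, w (v i))]
    have key : ∀ p : α × (Fin n → α),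
        (∏ i, w ((Fin.consEquiv fun _ : Fin (n+1) => α) p i)) = w p.1 * ∏ i, w (p.2 i) := by
      rintro ⟨a, u⟩
      simp [Fin.consEquiv, Fin.prod_univ_succ]
    simp only [key]
    rw [ENNReal.tsum_prod (f := fun a (u : Fin n → α) => w a * ∏ i, w (u i))]
    simp only [ENNReal.tsum_mul_left]
    rw [ENNReal.tsum_mul_right, ih, mul_comm]

/-- `ρ = 2` always satisfies `f_{n,B}(2) ≤ 1` when `B ≥ 1`. -/
lemma fnB_two_le_one (A : Set ℕ) (hA : ∀ a : A, 1 ≤ (a : ℕ)) {B : ℝ} (hB : 1 ≤ B) (n : ℕ) :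
    fnB A B n 2 ≤ 1 := by
  have hB0 : (0:ℝ) < B := lt_of_lt_of_le one_pos hB
  set w : A → ENNReal := fun a => ENNReal.ofReal ((1 : ℝ) / ((a : ℕ) * ((a : ℕ) + 1))) with hw
  have hterm : ∀ v : Fin n → A,
      ENNReal.ofReal ((B ^ (2 * n) * (qEven (List.ofFn fun i => (v i : ℕ)) : ℝ) ^ 2) ^ (-(2:ℝ)))
        ≤ ∏ i, w (v i) := by
    intro v
    set Q : ℕ := qEven (List.ofFn fun i => (v i : ℕ)) with hQdef
    have hQ1 : (1:ℕ) ≤ Q := one_le_qEven _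
    have hQ1R : (1:ℝ) ≤ (Q:ℝ) := by exact_mod_cast hQ1
    set x : ℝ := B ^ (2 * n) * (Q : ℝ) ^ 2 with hxdef
    have hx : (0:ℝ) < x := by positivity
    have hxpow : x ^ (-(2:ℝ)) = (x ^ (2:ℕ))⁻¹ := by
      rw [Real.rpow_neg hx.le, ← Real.rpow_natCast x 2]
      norm_num
    set P : ℕ := ∏ i, ((v i : ℕ) * ((v i : ℕ) + 1)) with hPdef
    have hPx : (P : ℝ) ≤ x ^ (2:ℕ) := by
      have h1 : (P:ℝ) ≤ (Q:ℝ) ^ 4 := by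
        have := qEven_pow4 (fun i => (v i : ℕ))
        exact_mod_cast this
      have hBn : (1:ℝ) ≤ B ^ (2 * n) := one_le_pow₀ hB
      calc (P:ℝ) ≤ (Q:ℝ) ^ 4 := h1
        _ ≤ (B ^ (2*n))^2 * (Q:ℝ)^4 := le_mul_of_one_le_left (by positivity) (one_le_pow₀ hBn)
        _ = x ^ (2:ℕ) := by rw [hxdef]; ring
    have hreal : x ^ (-(2:ℝ)) ≤ ∏ i, (1:ℝ) / ((v i : ℕ) * ((v i : ℕ) + 1)) := by
      rw [hxpow]
      have hprd : ∏ i, (1:ℝ) / ((v i : ℕ) * ((v i : ℕ) + 1)) = ((P:ℝ))⁻¹ := by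
        rw [hPdef]
        push_cast
        rw [← Finset.prod_inv_distrib]
        simp [one_div]
      rw [hprd]
      have hPpos : 0 < P := by
        rw [hPdef]
        refine Finset.prod_pos fun i _ => ?_
        have := hA (v i)
        positivity
      have hPposR : (0:ℝ) < (P:ℝ) := by exact_mod_cast hPpos
      exact inv_anti₀ hPposR hPx
    calc ENNReal.ofReal (x ^ (-(2:ℝ)))
        ≤ ENNReal.ofReal (∏ i, (1:ℝ) / ((v i : ℕ) * ((v i : ℕ) + 1))) :=
          ENNReal.ofReal_le_ofReal hreal
      _ = ∏ i, w (v i) := by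
          rw [ENNReal.ofReal_prod_of_nonneg]
          intro i _; positivity
  calc fnB A B n 2 ≤ ∑' v : Fin n → A, ∏ i, w (v i) := ENNReal.tsum_le_tsum hterm
    _ = (∑' a : A, w a) ^ n := tsum_pi_prod w n
    _ ≤ 1 ^ n := pow_le_pow_left' (sum_w_A A) n
    _ = 1 := one_pow n

/-- `f_{n,B}` is antitone in the base `B`. -/
lemma fnB_anti_base (A : Set ℕ) {B₁ B₂ : ℝ} (hB₁ : 0 < B₁) (h12 : B₁ ≤ B₂)
    {ρ : ℝ} (hρ : 0 ≤ ρ) (n : ℕ) : fnB A B₂ n ρ ≤ fnB A B₁ n ρ := by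
  refine ENNReal.tsum_le_tsum fun v => ENNReal.ofReal_le_ofReal ?_
  set Q : ℕ := qEven (List.ofFn fun i => (v i : ℕ))
  have hQ1 : (1:ℝ) ≤ (Q:ℝ) := by exact_mod_cast one_le_qEven _
  refine Real.rpow_le_rpow_of_nonpos (by positivity) ?_ (neg_nonpos.mpr hρ)
  have : B₁ ^ (2*n) ≤ B₂ ^ (2*n) := pow_le_pow_left₀ hB₁.le h12 _
  nlinarith [sq_nonneg (Q:ℝ)]

/-- Rescaling the base rescales the critical exponent. -/
lemma fnB_scale (A : Set ℕ) {B₁ B₂ : ℝ} (hB₁ : 1 < B₁) (h12 : B₁ ≤ B₂)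
    {ρ : ℝ} (hρ : 0 ≤ ρ) (n : ℕ) :
    fnB A B₁ n (Real.logb B₁ B₂ * ρ) ≤ fnB A B₂ n ρ := by
  have hB₁0 : (0:ℝ) < B₁ := lt_trans one_pos hB₁
  have hB₂1 : (1:ℝ) < B₂ := lt_of_lt_of_le hB₁ h12
  have hB₂0 : (0:ℝ) < B₂ := lt_trans one_pos hB₂1
  set c : ℝ := Real.logb B₁ B₂ with hc
  have hc1 : 1 ≤ c := by
    rw [hc, Real.logb, le_div_iff₀ (Real.log_pos hB₁), one_mul]
    exact Real.log_le_log hB₁0 h12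
  refine ENNReal.tsum_le_tsum fun v => ENNReal.ofReal_le_ofReal ?_
  set Q : ℕ := qEven (List.ofFn fun i => (v i : ℕ))
  have hQ1 : (1:ℝ) ≤ (Q:ℝ) := by exact_mod_cast one_le_qEven _
  have hQ2 : (1:ℝ) ≤ (Q:ℝ) ^ 2 := one_le_pow₀ hQ1
  rw [Real.mul_rpow (by positivity) (by positivity),
    Real.mul_rpow (by positivity) (by positivity)]
  have hfac1 : (B₁ ^ (2*n)) ^ (-(c * ρ)) = (B₂ ^ (2*n)) ^ (-ρ) := by
    rw [← Real.rpow_natCast B₁ (2*n), ← Real.rpow_natCast B₂ (2*n),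
      ← Real.rpow_mul hB₁0.le, ← Real.rpow_mul hB₂0.le]
    have hBc : B₁ ^ c = B₂ := Real.rpow_logb hB₁0 (ne_of_gt hB₁) hB₂0
    calc B₁ ^ (((2*n : ℕ):ℝ) * -(c * ρ)) = B₁ ^ (c * (((2*n : ℕ):ℝ) * -ρ)) := by ring_nf
      _ = (B₁ ^ c) ^ (((2*n : ℕ):ℝ) * -ρ) := Real.rpow_mul hB₁0.le _ _
      _ = B₂ ^ (((2*n : ℕ):ℝ) * -ρ) := by rw [hBc]
  have hfac2 : ((Q:ℝ) ^ 2) ^ (-(c * ρ)) ≤ ((Q:ℝ) ^ 2) ^ (-ρ) := by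
    refine Real.rpow_le_rpow_of_exponent_le hQ2 ?_
    nlinarith
  rw [hfac1]
  exact mul_le_mul_of_nonneg_left hfac2 (Real.rpow_nonneg (by positivity) _)

lemma snB_nonneg (A : Set ℕ) (B : ℝ) (n : ℕ) : 0 ≤ snB A B n :=
  Real.sInf_nonneg fun _ hx => hx.1

lemma snB_bddBelow (A : Set ℕ) (B : ℝ) (n : ℕ) :
    BddBelow {ρ : ℝ | 0 ≤ ρ ∧ fnB A B n ρ ≤ 1} := ⟨0, fun _ hx => hx.1⟩

lemma snB_nonempty (A : Set ℕ) (hA : ∀ a : A, 1 ≤ (a : ℕ)) {B : ℝ} (hB : 1 ≤ B) (n : ℕ) :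
    ((2:ℝ)) ∈ {ρ : ℝ | 0 ≤ ρ ∧ fnB A B n ρ ≤ 1} :=
  ⟨by norm_num, fnB_two_le_one A hA hB n⟩

lemma snB_le_two (A : Set ℕ) (hA : ∀ a : A, 1 ≤ (a : ℕ)) {B : ℝ} (hB : 1 ≤ B) (n : ℕ) :
    snB A B n ≤ 2 :=
  csInf_le (snB_bddBelow A B n) (snB_nonempty A hA hB n)

lemma snB_anti (A : Set ℕ) (hA : ∀ a : A, 1 ≤ (a : ℕ)) {B₁ B₂ : ℝ} (hB₁ : 1 < B₁) (h12 : B₁ ≤ B₂) (n : ℕ) :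
    snB A B₂ n ≤ snB A B₁ n := by
  refine csInf_le_csInf (snB_bddBelow A B₂ n) ⟨2, snB_nonempty A hA hB₁.le n⟩ ?_
  rintro ρ ⟨hρ0, hρ1⟩
  exact ⟨hρ0, le_trans (fnB_anti_base A (lt_trans one_pos hB₁) h12 hρ0 n) hρ1⟩

lemma snB_scale (A : Set ℕ) (hA : ∀ a : A, 1 ≤ (a : ℕ)) {B₁ B₂ : ℝ} (hB₁ : 1 < B₁) (h12 : B₁ ≤ B₂) (n : ℕ) :
    snB A B₁ n ≤ Real.logb B₁ B₂ * snB A B₂ n := by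
  have hB₂1 : (1:ℝ) < B₂ := lt_of_lt_of_le hB₁ h12
  have hc0 : 0 < Real.logb B₁ B₂ := Real.logb_pos hB₁ hB₂1
  rw [← div_le_iff₀' hc0]
  refine le_csInf ⟨2, snB_nonempty A hA hB₂1.le n⟩ ?_
  rintro ρ ⟨hρ0, hρ1⟩
  rw [div_le_iff₀' hc0]
  exact csInf_le (snB_bddBelow A B₁ n)
    ⟨mul_nonneg hc0.le hρ0, le_trans (fnB_scale A hB₁ h12 hρ0 n) hρ1⟩

end Aux

/-- Proposition 2.7, second part: `B ↦ s_B` is continuous on `(1, ∞)` and its right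
limit at `B = 1` exists. -/
theorem sB_continuous_and_right_limit (sB : ℝ → ℝ)
    (hsB : ∀ B : ℝ, 1 < B →
      Tendsto (fun n => snB {m : ℕ | 1 ≤ m} B n) atTop (nhds (sB B))) :
    ContinuousOn sB (Set.Ioi 1) ∧
      ∃ l : ℝ, Tendsto sB (nhdsWithin 1 (Set.Ioi 1)) (nhds l) := by
  set A : Set ℕ := {m : ℕ | 1 ≤ m} with hAdef
  have hA : ∀ a : A, 1 ≤ (a : ℕ) := fun a => a.2
  -- basic limit facts
  have hanti : AntitoneOn sB (Set.Ioi 1) := by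
    intro B₁ hB₁ B₂ hB₂ h12
    exact le_of_tendsto_of_tendsto' (hsB B₂ hB₂) (hsB B₁ hB₁)
      (fun n => snB_anti A hA hB₁ h12 n)
  have hnonneg : ∀ B : ℝ, 1 < B → 0 ≤ sB B := fun B hB =>
    ge_of_tendsto' (hsB B hB) (fun n => snB_nonneg A B n)
  have hle2 : ∀ B : ℝ, 1 < B → sB B ≤ 2 := fun B hB =>
    le_of_tendsto' (hsB B hB) (fun n => snB_le_two A hA hB.le n)
  have hscale : ∀ B₁ B₂ : ℝ, 1 < B₁ → B₁ ≤ B₂ → sB B₁ ≤ Real.logb B₁ B₂ * sB B₂ := by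
    intro B₁ B₂ hB₁ h12
    have hB₂1 : (1:ℝ) < B₂ := lt_of_lt_of_le hB₁ h12
    refine le_of_tendsto_of_tendsto' (hsB B₁ hB₁) ((hsB B₂ hB₂1).const_mul _)
      (fun n => snB_scale A hA hB₁ h12 n)
  constructor
  · -- continuity on (1, ∞)
    intro B hB
    have hB1 : (1:ℝ) < B := hB
    have hB0 : (0:ℝ) < B := lt_trans one_pos hB1
    have hlogB : Real.log B ≠ 0 := ne_of_gt (Real.log_pos hB1)
    set g : ℝ → ℝ := fun B' => Real.log B / Real.log B' * sB B with hg
    have hbound : ∀ B' ∈ Set.Ioi (1:ℝ),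
        min (sB B) (g B') ≤ sB B' ∧ sB B' ≤ max (sB B) (g B') := by
      intro B' hB'
      have hB'1 : (1:ℝ) < B' := hB'
      have hlogB' : (0:ℝ) < Real.log B' := Real.log_pos hB'1
      rcases le_total B' B with h | h
      · have h1 : sB B ≤ sB B' := hanti hB' hB h
        have h2 : sB B' ≤ g B' := by
          have := hscale B' B hB'1 h
          rwa [Real.logb] at this
        exact ⟨le_trans (min_le_left _ _) h1, le_trans h2 (le_max_right _ _)⟩
      · have h1 : sB B' ≤ sB B := hanti hB hB' h
        have h2 : g B' ≤ sB B' := by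
          have hs := hscale B B' hB1 h
          rw [Real.logb] at hs
          have hlogBpos : (0:ℝ) < Real.log B := Real.log_pos hB1
          rw [hg]
          dsimp only
          rw [div_mul_eq_mul_div, div_le_iff₀ hlogB']
          calc Real.log B * sB B ≤ Real.log B * (Real.log B' / Real.log B * sB B') := by
                refine mul_le_mul_of_nonneg_left hs hlogBpos.le
            _ = sB B' * Real.log B' := by field_simp
        exact ⟨le_trans (min_le_right _ _) h2, le_trans h1 (le_max_left _ _)⟩
    have hgt : Tendsto g (nhdsWithin B (Set.Ioi 1)) (nhds (sB B)) := by
      have hcont : Tendsto g (nhds B) (nhds (g B)) := by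
        refine Tendsto.mul (Tendsto.div tendsto_const_nhds ?_ hlogB) tendsto_const_nhds
        exact (Real.continuousAt_log (ne_of_gt hB0)).tendsto
      have : g B = sB B := by rw [hg]; dsimp only; rw [div_self hlogB, one_mul]
      rw [this] at hcont
      exact hcont.mono_left nhdsWithin_le_nhds
    have hmin : Tendsto (fun B' => min (sB B) (g B')) (nhdsWithin B (Set.Ioi 1)) (nhds (sB B)) := by
      have := Tendsto.min (tendsto_const_nhds (x := sB B)) hgt
      rwa [min_self] at this
    have hmax : Tendsto (fun B' => max (sB B) (g B')) (nhdsWithin B (Set.Ioi 1)) (nhds (sB B)) := by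
      have := Tendsto.max (tendsto_const_nhds (x := sB B)) hgt
      rwa [max_self] at this
    refine tendsto_of_tendsto_of_tendsto_of_le_of_le' hmin hmax ?_ ?_
    · filter_upwards [self_mem_nhdsWithin] with B' hB' using (hbound B' hB').1
    · filter_upwards [self_mem_nhdsWithin] with B' hB' using (hbound B' hB').2
  · -- right limit at 1
    refine ⟨sSup (sB '' Set.Ioi 1), ?_⟩
    refine AntitoneOn.tendsto_nhdsGT hanti ?_
    refine ⟨2, ?_⟩
    rintro y ⟨B, hB, rfl⟩
    exact hle2 B hB
end
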